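/- arXiv:2210.16082 — 5 statements merged into one kernel-verified Lean document; each statement's English description precedes it below -/
import Mathlib

section
/- Let f, g be admissible circle densities with cumulative distribution functions F, G, corresponding measures μ, ν on S¹ = ℝ/ℤ, and let I(α) = ∫₀¹ (F⁻¹(t) − G⁻¹(t − α))² dt. If α* ∈ ℝ attains the infimum of I over ℝ, then the map T : S¹ → S¹ induced by t ↦ G⁻¹(F(t) − α*) (taken modulo 1) satisfies T_*μ = ν and ∫_{S¹} d(x, T(x))² dμ(x) = inf_{α ∈ ℝ} I(α); in particular T is an optimal transport map from μ to ν for the cost d² on the circle. -/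
open MeasureTheory Set Function intervalIntegral
open scoped ENNReal NNReal

lemma lintegral_image_1d {s : Set ℝ} {f : ℝ → ℝ} {f' : ℝ → ℝ}
    (hs : MeasurableSet s) (hf' : ∀ x ∈ s, HasDerivWithinAt f (f' x) s x)
    (hf : InjOn f s) (g : ℝ → ℝ≥0∞) :
    ∫⁻ x in f '' s, g x = ∫⁻ x in s, ENNReal.ofReal |f' x| * g (f x) := by
  have := lintegral_image_eq_lintegral_abs_det_fderiv_mul volume hs
    (fun x hx => (hf' x hx).hasFDerivWithinAt) hf g
  simpa only [ContinuousLinearMap.det_toSpanSingleton] using this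

lemma setLIntegral_shift (φ : ℝ → ℝ≥0∞) (c : ℝ) (A : Set ℝ) :
    ∫⁻ x in (fun x => x + c) ⁻¹' A, φ (x + c) = ∫⁻ x in A, φ x :=
  (measurePreserving_add_right volume c).setLIntegral_comp_preimage_emb
    (measurableEmbedding_addRight c) φ A

lemma setLIntegral_Ico_shift (φ : ℝ → ℝ≥0∞) (c d e : ℝ) :
    ∫⁻ x in Ico (d + c) (e + c), φ x = ∫⁻ x in Ico d e, φ (x + c) := by
  have h : (fun x => x + c) ⁻¹' Ico (d + c) (e + c) = Ico d e := by
    ext x; simp [Set.mem_Ico]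
  rw [← setLIntegral_shift φ c (Ico (d + c) (e + c)), h]

lemma wrap_lintegral (φ : ℝ → ℝ≥0∞) (hp : ∀ x, φ (x + 1) = φ x) (a : ℝ) :
    ∫⁻ x in Ico a (a + 1), φ x = ∫⁻ x in Ico (0:ℝ) 1, φ x := by
  have hper : Function.Periodic φ 1 := hp
  have hint : ∀ (n : ℤ) (x : ℝ), φ (x + n) = φ x := by
    intro n x
    have := hper.sub_zsmul_eq (-n) (x := x)
    simpa using this
  set n : ℤ := ⌊a⌋ with hn
  set b : ℝ := a - n with hb
  have hb0 : 0 ≤ b := by simp [hb, hn, Int.floor_le]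
  have hb1 : b < 1 := by
    have h2 := Int.lt_floor_add_one a
    simp only [hb, hn]
    linarith
  have step1 : ∫⁻ x in Ico a (a + 1), φ x = ∫⁻ x in Ico b (b + 1), φ x := by
    have : a = b + (n : ℝ) := by simp [hb]
    rw [this, show b + (n:ℝ) + 1 = (b + 1) + (n : ℝ) by ring,
      setLIntegral_Ico_shift φ (n : ℝ) b (b + 1)]
    exact setLIntegral_congr_fun measurableSet_Ico
      (fun x _ => hint n x)
  have split1 : Ico b 1 ∪ Ico 1 (b + 1) = Ico b (b + 1) :=
    Ico_union_Ico_eq_Ico hb1.le (by linarith)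
  have split2 : Ico (0:ℝ) b ∪ Ico b 1 = Ico (0:ℝ) 1 := Ico_union_Ico_eq_Ico hb0 hb1.le
  have shift2 : ∫⁻ x in Ico (1:ℝ) (b + 1), φ x = ∫⁻ x in Ico (0:ℝ) b, φ x := by
    have h3 := setLIntegral_Ico_shift φ 1 0 b
    rw [zero_add] at h3
    rw [h3]
    exact setLIntegral_congr_fun measurableSet_Ico
      (fun x _ => hp x)
  rw [step1, ← split1, ← split2,
    lintegral_union measurableSet_Ico Ico_disjoint_Ico_same,
    lintegral_union measurableSet_Ico Ico_disjoint_Ico_same,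
    shift2, add_comm]

lemma circle_coe_int_zero (k : ℤ) : ((k : ℝ) : AddCircle (1:ℝ)) = 0 := by
  rw [AddCircle.coe_eq_zero_iff]
  exact ⟨k, by simp⟩

lemma circle_coe_sub_int (x : ℝ) (k : ℤ) :
    ((x - k : ℝ) : AddCircle (1:ℝ)) = (x : AddCircle (1:ℝ)) := by
  rw [QuotientAddGroup.mk_sub, circle_coe_int_zero, sub_zero]

lemma circle_dist_eq (x y : ℝ) :
    dist (x : AddCircle (1:ℝ)) (y : AddCircle (1:ℝ)) = |x - y - round (x - y)| := by
  rw [dist_eq_norm]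
  rw [← QuotientAddGroup.mk_sub, AddCircle.norm_eq]
  simp

lemma circle_dist_le (x y : ℝ) :
    dist (x : AddCircle (1:ℝ)) (y : AddCircle (1:ℝ)) ≤ |x - y| := by
  rw [circle_dist_eq]
  simpa using round_le (x - y) 0

lemma circle_dist_half (z w : AddCircle (1:ℝ)) : dist z w ≤ 1 / 2 := by
  induction z using QuotientAddGroup.induction_on with
  | H x =>
    induction w using QuotientAddGroup.induction_on with
    | H y => rw [circle_dist_eq]; exact abs_sub_round _

lemma circle_dist_exists (x y : ℝ) :
    ∃ z : ℝ, (z : AddCircle (1:ℝ)) = (x : AddCircle (1:ℝ)) ∧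
      dist (x : AddCircle (1:ℝ)) (y : AddCircle (1:ℝ)) = |z - y| := by
  refine ⟨x - round (x - y), circle_coe_sub_int x (round (x - y)), ?_⟩
  rw [circle_dist_eq]
  ring_nf

lemma indicator_one_mul_lintegral (s A : Set ℝ) (hA : MeasurableSet A) (h : ℝ → ℝ≥0∞) :
    ∫⁻ x in s, A.indicator (fun _ => (1:ℝ≥0∞)) x * h x ∂volume
      = ∫⁻ x in A ∩ s, h x ∂volume := by
  have heq : ∀ x, A.indicator (fun _ => (1:ℝ≥0∞)) x * h x = A.indicator h x := by
    intro x
    by_cases hx : x ∈ A <;> simp [Set.indicator_apply, hx]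
  rw [lintegral_congr heq, lintegral_indicator hA, Measure.restrict_restrict hA]



section CDF
variable {p P Pinv : ℝ → ℝ} {η : ℝ}

lemma cdf_hasDerivAt (hpc : Continuous p) (hP : ∀ t, P t = ∫ τ in (0:ℝ)..t, p τ) (t : ℝ) :
    HasDerivAt P (p t) t := by
  have h : P = fun u => ∫ τ in (0:ℝ)..u, p τ := funext hP
  rw [h]
  exact (hpc.integral_hasStrictDerivAt 0 t).hasDerivAt

lemma cdf_strictMono (hpc : Continuous p) (hη : 0 < η) (hpl : ∀ t, η ≤ p t)
    (hP : ∀ t, P t = ∫ τ in (0:ℝ)..t, p τ) : StrictMono P := by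
  apply strictMono_of_deriv_pos
  intro x
  rw [(cdf_hasDerivAt hpc hP x).deriv]
  exact lt_of_lt_of_le hη (hpl x)

lemma cdf_add_one (hpc : Continuous p) (hpp : Function.Periodic p 1)
    (hpm : (∫ t in (0:ℝ)..1, p t) = 1)
    (hP : ∀ t, P t = ∫ τ in (0:ℝ)..t, p τ) (t : ℝ) : P (t + 1) = P t + 1 := by
  rw [hP, hP]
  rw [← intervalIntegral.integral_add_adjacent_intervals
    (hpc.intervalIntegrable 0 t) (hpc.intervalIntegrable t (t+1))]
  congr 1
  rw [hpp.intervalIntegral_add_eq t 0, zero_add, hpm]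

lemma cdf_inv_eq (hpc : Continuous p) (hη : 0 < η) (hpl : ∀ t, η ≤ p t)
    (hP : ∀ t, P t = ∫ τ in (0:ℝ)..t, p τ)
    (hP₂ : Function.RightInverse Pinv P) :
    Pinv = fun y => ((cdf_strictMono hpc hη hpl hP).orderIsoOfSurjective P hP₂.surjective).symm y := by
  funext y
  apply (cdf_strictMono hpc hη hpl hP).injective
  rw [hP₂ y]
  have h1 := ((cdf_strictMono hpc hη hpl hP).orderIsoOfSurjective P hP₂.surjective).apply_symm_apply y
  calc y = ((cdf_strictMono hpc hη hpl hP).orderIsoOfSurjective P hP₂.surjective)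
        (((cdf_strictMono hpc hη hpl hP).orderIsoOfSurjective P hP₂.surjective).symm y) := h1.symm
    _ = P (((cdf_strictMono hpc hη hpl hP).orderIsoOfSurjective P hP₂.surjective).symm y) := by
        rw [StrictMono.coe_orderIsoOfSurjective]

lemma cdf_inv_continuous (hpc : Continuous p) (hη : 0 < η) (hpl : ∀ t, η ≤ p t)
    (hP : ∀ t, P t = ∫ τ in (0:ℝ)..t, p τ)
    (hP₂ : Function.RightInverse Pinv P) : Continuous Pinv := by
  rw [cdf_inv_eq hpc hη hpl hP hP₂]
  exact (((cdf_strictMono hpc hη hpl hP).orderIsoOfSurjective P hP₂.surjective).symm).continuous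

lemma cdf_inv_hasDerivAt (hpc : Continuous p) (hη : 0 < η) (hpl : ∀ t, η ≤ p t)
    (hP : ∀ t, P t = ∫ τ in (0:ℝ)..t, p τ)
    (hP₂ : Function.RightInverse Pinv P) (y : ℝ) :
    HasDerivAt Pinv (p (Pinv y))⁻¹ y := by
  exact HasDerivAt.of_local_left_inverse
    ((cdf_inv_continuous hpc hη hpl hP hP₂).continuousAt)
    (cdf_hasDerivAt hpc hP (Pinv y))
    (ne_of_gt (lt_of_lt_of_le hη (hpl _)))
    (Filter.Eventually.of_forall hP₂)

lemma cdf_inv_add_one (hpc : Continuous p) (hη : 0 < η) (hpl : ∀ t, η ≤ p t)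
    (hpp : Function.Periodic p 1) (hpm : (∫ t in (0:ℝ)..1, p t) = 1)
    (hP : ∀ t, P t = ∫ τ in (0:ℝ)..t, p τ)
    (hP₂ : Function.RightInverse Pinv P) (y : ℝ) : Pinv (y + 1) = Pinv y + 1 := by
  apply (cdf_strictMono hpc hη hpl hP).injective
  rw [hP₂, cdf_add_one hpc hpp hpm hP, hP₂]

lemma cdf_zero (hP : ∀ t, P t = ∫ τ in (0:ℝ)..t, p τ) : P 0 = 0 := by
  rw [hP]; simp

lemma cdf_one (hpm : (∫ t in (0:ℝ)..1, p t) = 1)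
    (hP : ∀ t, P t = ∫ τ in (0:ℝ)..t, p τ) : P 1 = 1 := by
  rw [hP]; exact hpm

end CDF



/-- If α* minimizes I(α) = ∫₀¹ (F⁻¹(t) − G⁻¹(t − α))² dt over ℝ, then the
map of the circle induced by t ↦ G⁻¹(F(t) − α*) pushes μ forward to ν, realizes the
infimum of I as its transport cost, and is an optimal transport map for the cost d². -/
theorem optimal_map_on_circle_from_minimizer
    (f g F G Finv Ginv : ℝ → ℝ) (η : ℝ) (hη : 0 < η)
    (hfc : Continuous f) (hgc : Continuous g)
    (hfp : Function.Periodic f 1) (hgp : Function.Periodic g 1)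
    (hfl : ∀ t, η ≤ f t) (hgl : ∀ t, η ≤ g t)
    (hfm : (∫ t in (0:ℝ)..1, f t) = 1) (hgm : (∫ t in (0:ℝ)..1, g t) = 1)
    (hF : ∀ t, F t = ∫ τ in (0:ℝ)..t, f τ) (hG : ∀ t, G t = ∫ τ in (0:ℝ)..t, g τ)
    (hF₁ : Function.LeftInverse Finv F) (hF₂ : Function.RightInverse Finv F)
    (hG₁ : Function.LeftInverse Ginv G) (hG₂ : Function.RightInverse Ginv G)
    (μ ν : Measure (AddCircle (1:ℝ)))
    (hμ : μ = Measure.map (fun t : ℝ => (t : AddCircle (1:ℝ)))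
      ((volume.restrict (Set.Ico (0:ℝ) 1)).withDensity fun t => ENNReal.ofReal (f t)))
    (hν : ν = Measure.map (fun t : ℝ => (t : AddCircle (1:ℝ)))
      ((volume.restrict (Set.Ico (0:ℝ) 1)).withDensity fun t => ENNReal.ofReal (g t)))
    (I : ℝ → ℝ) (hI : ∀ α, I α = ∫ t in (0:ℝ)..1, (Finv t - Ginv (t - α)) ^ 2)
    (αs : ℝ) (hmin : ∀ α : ℝ, I αs ≤ I α)
    (T : AddCircle (1:ℝ) → AddCircle (1:ℝ))
    (hT : ∀ t : ℝ, T (t : AddCircle (1:ℝ)) = ((Ginv (F t - αs) : ℝ) : AddCircle (1:ℝ))) :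
    Measure.map T μ = ν ∧
      ((∫ x, dist x (T x) ^ 2 ∂μ) = ⨅ α : ℝ, I α) ∧
      ∀ S : AddCircle (1:ℝ) → AddCircle (1:ℝ), Measurable S → Measure.map S μ = ν →
        (∫ x, dist x (T x) ^ 2 ∂μ) ≤ ∫ x, dist x (S x) ^ 2 ∂μ := by
  -- basic facts on densities and CDFs
  have hfpos : ∀ t, 0 < f t := fun t => lt_of_lt_of_le hη (hfl t)
  have hgpos : ∀ t, 0 < g t := fun t => lt_of_lt_of_le hη (hgl t)
  have hFd : ∀ t, HasDerivAt F (f t) t := cdf_hasDerivAt hfc hF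
  have hGd : ∀ t, HasDerivAt G (g t) t := cdf_hasDerivAt hgc hG
  have hFmono : StrictMono F := cdf_strictMono hfc hη hfl hF
  have hGmono : StrictMono G := cdf_strictMono hgc hη hgl hG
  have hFcont : Continuous F := continuous_iff_continuousAt.2 fun t =>
    (hFd t).continuousAt
  have hFinvc : Continuous Finv := cdf_inv_continuous hfc hη hfl hF hF₂
  have hGinvc : Continuous Ginv := cdf_inv_continuous hgc hη hgl hG hG₂
  have hGinvd : ∀ y, HasDerivAt Ginv (g (Ginv y))⁻¹ y := cdf_inv_hasDerivAt hgc hη hgl hG hG₂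
  have hGinv1 : ∀ y, Ginv (y + 1) = Ginv y + 1 := cdf_inv_add_one hgc hη hgl hgp hgm hG hG₂
  have hF0 : F 0 = 0 := cdf_zero hF
  have hF1 : F 1 = 1 := cdf_one hfm hF
  have hFadd : ∀ t, F (t + 1) = F t + 1 := cdf_add_one hfc hfp hfm hF
  -- the transport map on ℝ
  set u : ℝ → ℝ := fun x => Ginv (F x - αs) with hu
  have hucont : Continuous u := hGinvc.comp ((hFcont).sub continuous_const)
  have hud : ∀ x, HasDerivAt u ((g (u x))⁻¹ * f x) x := by
    intro x
    have h1 : HasDerivAt (fun x => F x - αs) (f x) x := (hFd x).sub_const αs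
    have h2 := (hGinvd (F x - αs)).comp x h1
    exact h2
  have humono : StrictMono u := fun a b hab =>
    hGmono.lt_iff_lt.mp (by
      rw [hG₂, hG₂]; exact sub_lt_sub_right (hFmono hab) αs)
  have huadd : ∀ x, u (x + 1) = u x + 1 := by
    intro x
    show Ginv (F (x+1) - αs) = Ginv (F x - αs) + 1
    rw [hFadd, show F x + 1 - αs = (F x - αs) + 1 by ring, hGinv1]
  have huinv : ∀ y, u (Finv (G y + αs)) = y := by
    intro y
    show Ginv (F (Finv (G y + αs)) - αs) = y
    rw [hF₂, add_sub_cancel_right, hG₁]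
  set v : ℝ → ℝ := fun x => x - u x with hv
  have hvcont : Continuous v := continuous_id.sub hucont
  have hvper : ∀ x, v (x + 1) = v x := by
    intro x; show (x+1) - u (x+1) = x - u x; rw [huadd]; ring
  -- Part B : the displacement has mean zero at the minimizer
  have hvmean : (∫ x in (0:ℝ)..1, v x) = 0 := by
    obtain ⟨K₁, hK₁⟩ := isCompact_Icc.exists_bound_of_continuousOn
      (hFinvc.continuousOn : ContinuousOn Finv (Icc (0:ℝ) 1))
    obtain ⟨K₂, hK₂⟩ := isCompact_Icc.exists_bound_of_continuousOn
      (hGinvc.continuousOn : ContinuousOn Ginv (Icc (-1-αs) (2-αs)))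
    have hK₁0 : 0 ≤ K₁ := le_trans (norm_nonneg _) (hK₁ 0 (by norm_num))
    have hK₂0 : 0 ≤ K₂ := le_trans (norm_nonneg _) (hK₂ (-1-αs) ⟨le_refl _, by linarith⟩)
    have hGinvcomp : Continuous fun t : ℝ => Ginv (t - αs) :=
      hGinvc.comp (continuous_id.sub continuous_const)
    have hHcont : Continuous fun t => Finv t - Ginv (t - αs) := hFinvc.sub hGinvcomp
    set D : ℝ → ℝ := fun t => 2 * (Finv t - Ginv (t - αs)) * (g (Ginv (t - αs)))⁻¹ with hD
    have hDcont : Continuous D := by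
      apply (continuous_const.mul hHcont).mul
      exact (hgc.comp hGinvcomp).inv₀ (fun x => ne_of_gt (hgpos _))
    have hIeq : I = fun α => ∫ t in (0:ℝ)..1, (Finv t - Ginv (t - α))^2 := funext hI
    have hderiv : HasDerivAt I (∫ t in (0:ℝ)..1, D t) αs := by
      rw [hIeq]
      refine (intervalIntegral.hasDerivAt_integral_of_dominated_loc_of_deriv_le
        (F := fun α t => (Finv t - Ginv (t - α))^2)
        (F' := fun α t => 2 * (Finv t - Ginv (t - α)) * (g (Ginv (t - α)))⁻¹)
        (x₀ := αs) (a := 0) (b := 1) (s := Metric.ball αs 1)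
        (bound := fun _ => 2 * (K₁ + K₂) * η⁻¹)
        (Metric.ball_mem_nhds αs one_pos) ?_ ?_ ?_ ?_ ?_ ?_).2
      · apply Filter.Eventually.of_forall
        intro α
        exact ((hFinvc.sub (hGinvc.comp (continuous_id.sub continuous_const))).pow 2).aestronglyMeasurable
      · exact (hHcont.pow 2).intervalIntegrable 0 1
      · exact hDcont.aestronglyMeasurable
      · apply Filter.Eventually.of_forall
        intro t ht α hα
        rw [Set.uIoc_of_le (zero_le_one)] at ht
        rw [Metric.mem_ball, Real.dist_eq] at hα
        have hta : t - α ∈ Icc (-1-αs) (2-αs) := by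
          have h9 := abs_lt.1 hα
          rw [Set.mem_Icc]
          constructor <;> linarith [ht.1, ht.2, h9.1, h9.2]
        have h1 : |Finv t| ≤ K₁ := by
          have := hK₁ t ⟨ht.1.le, ht.2⟩
          rwa [Real.norm_eq_abs] at this
        have h2 : |Ginv (t - α)| ≤ K₂ := by
          have := hK₂ (t - α) hta
          rwa [Real.norm_eq_abs] at this
        have h3 : |(g (Ginv (t - α)))⁻¹| ≤ η⁻¹ := by
          rw [abs_inv, abs_of_pos (hgpos _)]
          exact inv_anti₀ hη (hgl _)
        have h4 : |Finv t - Ginv (t - α)| ≤ K₁ + K₂ :=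
          le_trans (abs_sub _ _) (add_le_add h1 h2)
        calc ‖2 * (Finv t - Ginv (t - α)) * (g (Ginv (t - α)))⁻¹‖
            = 2 * (|Finv t - Ginv (t - α)| * |(g (Ginv (t - α)))⁻¹|) := by
              rw [Real.norm_eq_abs, abs_mul, abs_mul]
              norm_num; ring
          _ ≤ 2 * ((K₁ + K₂) * η⁻¹) := by
              apply mul_le_mul_of_nonneg_left _ (by norm_num)
              exact mul_le_mul h4 h3 (abs_nonneg _) (by linarith)
          _ = 2 * (K₁ + K₂) * η⁻¹ := by ring
      · exact intervalIntegrable_const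
      · apply Filter.Eventually.of_forall
        intro t _ α _
        have h1 : HasDerivAt (fun a : ℝ => t - a) (-1) α := by
          simpa using (hasDerivAt_id α).const_sub t
        have h2 : HasDerivAt (fun a => Ginv (t - a)) ((g (Ginv (t - α)))⁻¹ * (-1)) α :=
          (hGinvd (t - α)).comp α h1
        have h3 : HasDerivAt (fun a => Finv t - Ginv (t - a)) ((g (Ginv (t - α)))⁻¹) α := by
          simpa using h2.const_sub (Finv t)
        have h4 : HasDerivAt (fun a => (Finv t - Ginv (t - a))^2) _ α := h3.pow 2
        refine h4.congr_deriv ?_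
        simp [pow_one]
    have hlocI : IsLocalMin I αs := Filter.Eventually.of_forall hmin
    have hzero : (∫ t in (0:ℝ)..1, D t) = 0 := hlocI.hasDerivAt_eq_zero hderiv
    have hcov := intervalIntegral.integral_comp_smul_deriv (a := (0:ℝ)) (b := (1:ℝ))
      (f := F) (f' := f) (g := D)
      (fun x _ => hFd x) hfc.continuousOn hDcont
    rw [hF0, hF1, hzero] at hcov
    have hcov' : (∫ x in (0:ℝ)..1, 2 * v x * ((g (u x))⁻¹ * f x)) = 0 := by
      have heqint : (∫ x in (0:ℝ)..1, 2 * v x * ((g (u x))⁻¹ * f x))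
          = ∫ x in (0:ℝ)..1, f x • (D ∘ F) x := by
        apply intervalIntegral.integral_congr
        intro x _
        show 2 * v x * ((g (u x))⁻¹ * f x) = f x • (D ∘ F) x
        simp only [hD, Function.comp, hF₁ x, smul_eq_mul, hv, hu]
        ring
      rw [heqint]
      exact hcov
    have hv2d : ∀ x, HasDerivAt (fun y => (v y)^2) (2 * v x * (1 - (g (u x))⁻¹ * f x)) x := by
      intro x
      have hvd : HasDerivAt v (1 - (g (u x))⁻¹ * f x) x := by
        exact (hasDerivAt_id x).sub (hud x)
      have h5 : HasDerivAt (fun y => (v y)^2) _ x := hvd.pow 2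
      convert h5 using 1
      simp [pow_one]
      try ring
    have hupcont : Continuous fun x => (g (u x))⁻¹ * f x :=
      ((hgc.comp hucont).inv₀ (fun x => ne_of_gt (hgpos _))).mul hfc
    have hcont3 : Continuous fun x => 2 * v x * (1 - (g (u x))⁻¹ * f x) :=
      (continuous_const.mul hvcont).mul (continuous_const.sub hupcont)
    have hcont4 : Continuous fun x => 2 * v x * ((g (u x))⁻¹ * f x) :=
      (continuous_const.mul hvcont).mul hupcont
    have hftc := intervalIntegral.integral_eq_sub_of_hasDerivAt (f := fun y => (v y)^2)
      (a := 0) (b := 1) (fun x _ => hv2d x) (hcont3.intervalIntegrable 0 1)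
    have hv10 : v 1 = v 0 := by
      have := hvper 0
      simpa using this
    have hftc0 : (∫ x in (0:ℝ)..1, 2 * v x * (1 - (g (u x))⁻¹ * f x)) = 0 := by
      rw [hftc]
      simp [hv10]
    have hsplit : (∫ x in (0:ℝ)..1, 2 * v x)
        = (∫ x in (0:ℝ)..1, 2 * v x * (1 - (g (u x))⁻¹ * f x))
          + (∫ x in (0:ℝ)..1, 2 * v x * ((g (u x))⁻¹ * f x)) := by
      rw [← intervalIntegral.integral_add (hcont3.intervalIntegrable 0 1) (hcont4.intervalIntegrable 0 1)]
      apply intervalIntegral.integral_congr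
      intro x _
      ring
    rw [hftc0, hcov', add_zero] at hsplit
    have h2v : (2:ℝ) * ∫ x in (0:ℝ)..1, v x = 0 := by
      rw [← intervalIntegral.integral_const_mul]
      exact hsplit
    linarith
  -- the Kantorovich potential on ℝ
  set φr : ℝ → ℝ := fun x => ∫ s in (0:ℝ)..x, 2 * v s with hφr
  have h2vcont : Continuous fun s => 2 * v s := continuous_const.mul hvcont
  have hφrd : ∀ x, HasDerivAt φr (2 * v x) x := by
    intro x
    have := (h2vcont.integral_hasStrictDerivAt 0 x).hasDerivAt
    rw [hφr]
    exact this
  have hφrcont : Continuous φr := continuous_iff_continuousAt.2 fun t =>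
    (hφrd t).continuousAt
  have hφrper : Function.Periodic φr 1 := by
    intro x
    have h2vper : Function.Periodic (fun s => 2 * v s) 1 := fun s => by simp [hvper s]
    have hadj := intervalIntegral.integral_add_adjacent_intervals
      (h2vcont.intervalIntegrable (μ := volume) 0 x) (h2vcont.intervalIntegrable (μ := volume) x (x+1))
    have hper := h2vper.intervalIntegral_add_eq x 0
    show (∫ s in (0:ℝ)..(x+1), 2 * v s) = ∫ s in (0:ℝ)..x, 2 * v s
    rw [← hadj, hper, zero_add]
    have hz : (∫ s in (0:ℝ)..1, 2 * v s) = 0 := by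
      rw [intervalIntegral.integral_const_mul, hvmean, mul_zero]
    rw [hz, add_zero]
  -- the key pointwise inequality
  have key : ∀ x z : ℝ, (x - u x)^2 - φr x ≤ (z - u x)^2 - φr z := by
    intro x z
    have hρd : ∀ s : ℝ, HasDerivAt (fun w => (w - u x)^2 - φr w) (2*(u s - u x)) s := by
      intro s
      have h1 : HasDerivAt (fun w : ℝ => (w - u x)^2) (2*(s - u x)) s := by
        have h0 : HasDerivAt (fun w : ℝ => (w - u x)^2) _ s := ((hasDerivAt_id s).sub_const (u x)).pow 2
        convert h0 using 1
        simp [pow_one]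
        try ring
      have h2 : HasDerivAt (fun w => (w - u x)^2 - φr w) _ s := h1.sub (hφrd s)
      convert h2 using 1
      simp only [hv]
      ring
    have hcont2 : Continuous fun s => 2*(u s - u x) :=
      continuous_const.mul (hucont.sub continuous_const)
    have heq := intervalIntegral.integral_eq_sub_of_hasDerivAt
      (f := fun w => (w - u x)^2 - φr w) (a := x) (b := z)
      (fun s _ => hρd s) (hcont2.intervalIntegrable x z)
    have hge : 0 ≤ ∫ s in x..z, 2*(u s - u x) := by
      rcases le_total x z with h | h
      · apply intervalIntegral.integral_nonneg h
        intro s hs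
        have := humono.monotone hs.1
        linarith
      · rw [intervalIntegral.integral_symm]
        have h7 : (∫ s in z..x, 2*(u s - u x)) = - ∫ s in z..x, 2*(u x - u s) := by
          rw [← intervalIntegral.integral_neg]
          apply intervalIntegral.integral_congr
          intro s _
          ring
        have h8 : 0 ≤ ∫ s in z..x, 2*(u x - u s) := by
          apply intervalIntegral.integral_nonneg h
          intro s hs
          have := humono.monotone hs.2
          linarith
        rw [h7]
        linarith
    have hge' : 0 ≤ ((z - u x)^2 - φr z) - ((x - u x)^2 - φr x) := by
      rw [heq] at hge
      simpa using hge
    linarith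
  -- circle potentials
  set φ : AddCircle (1:ℝ) → ℝ := hφrper.lift with hφdef
  have hφcoe : ∀ x : ℝ, φ ((x : ℝ) : AddCircle (1:ℝ)) = φr x := fun x => hφrper.lift_coe x
  have hφcont : Continuous φ := by
    rw [hφdef]
    exact hφrcont.quotient_liftOn' _
  obtain ⟨Cφ, hCφ⟩ : ∃ C : ℝ, ∀ z : AddCircle (1:ℝ), |φ z| ≤ C := by
    obtain ⟨C, hC⟩ := isCompact_univ.exists_bound_of_continuousOn hφcont.continuousOn
    exact ⟨C, fun z => by simpa using hC z trivial⟩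
  set ψ : AddCircle (1:ℝ) → ℝ := fun y => ⨅ x : AddCircle (1:ℝ), (dist x y ^ 2 - φ x) with hψdef
  have hbdd : ∀ y, BddBelow (range fun x : AddCircle (1:ℝ) => dist x y ^ 2 - φ x) := by
    intro y
    refine ⟨-Cφ, ?_⟩
    rintro r ⟨x, rfl⟩
    have h2 := (abs_le.1 (hCφ x)).2
    have h3 : (0:ℝ) ≤ dist x y ^ 2 := by positivity
    show -Cφ ≤ dist x y ^ 2 - φ x
    linarith
  have hψle : ∀ x y : AddCircle (1:ℝ), φ x + ψ y ≤ dist x y ^ 2 := by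
    intro x y
    have h1 : ψ y ≤ dist x y ^ 2 - φ x := ciInf_le (hbdd y) x
    linarith
  have hψu : ∀ x : ℝ, ψ ((u x : ℝ) : AddCircle (1:ℝ)) = (x - u x)^2 - φr x := by
    intro x
    apply le_antisymm
    · have h1 : ψ ((u x : ℝ) : AddCircle (1:ℝ))
          ≤ dist ((x:ℝ) : AddCircle (1:ℝ)) ((u x : ℝ) : AddCircle (1:ℝ)) ^ 2 - φ ((x:ℝ) : AddCircle (1:ℝ)) :=
        ciInf_le (hbdd _) _
      have h2 : dist ((x:ℝ) : AddCircle (1:ℝ)) ((u x : ℝ) : AddCircle (1:ℝ)) ^ 2 ≤ (x - u x)^2 := by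
        calc dist ((x:ℝ) : AddCircle (1:ℝ)) ((u x : ℝ) : AddCircle (1:ℝ)) ^ 2
            ≤ |x - u x| ^ 2 := pow_le_pow_left₀ dist_nonneg (circle_dist_le x (u x)) 2
          _ = (x - u x)^2 := sq_abs _
      rw [hφcoe] at h1
      linarith
    · apply le_ciInf
      intro x'
      induction x' using QuotientAddGroup.induction_on with
      | H w =>
        obtain ⟨z, hz1, hz2⟩ := circle_dist_exists w (u x)
        rw [hz2, ← hz1, hφcoe]
        have h3 : |z - u x| ^ 2 = (z - u x)^2 := sq_abs _
        rw [h3]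
        exact key x z
  have hψT : ∀ x : ℝ, φ ((x:ℝ) : AddCircle (1:ℝ)) + ψ (T ((x:ℝ) : AddCircle (1:ℝ))) = (x - u x)^2 := by
    intro x
    rw [hT x, hφcoe]
    have := hψu x
    rw [this]
    ring
  have hψlip : ∀ y y' : AddCircle (1:ℝ), ψ y' ≤ ψ y + 2 * dist y y' := by
    intro y y'
    have h1 : ∀ x : AddCircle (1:ℝ), ψ y' - 2 * dist y y' ≤ dist x y ^ 2 - φ x := by
      intro x
      have h2 : ψ y' ≤ dist x y' ^ 2 - φ x := ciInf_le (hbdd y') x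
      have h3 : dist x y' ≤ dist x y + dist y y' := dist_triangle x y y'
      have h4 : dist x y' ^ 2 ≤ dist x y ^ 2 + 2 * dist y y' := by
        have h5 : dist x y' ^ 2 ≤ (dist x y + dist y y')^2 :=
          pow_le_pow_left₀ dist_nonneg h3 2
        have h6 : dist x y ≤ 1/2 := circle_dist_half x y
        have h7 : dist y y' ≤ 1/2 := circle_dist_half y y'
        have h8 : (0:ℝ) ≤ dist y y' := dist_nonneg
        have h9 : (0:ℝ) ≤ dist x y := dist_nonneg
        nlinarith
      linarith
    have h10 : ψ y' - 2 * dist y y' ≤ ψ y := le_ciInf h1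
    linarith
  have hψcont : Continuous ψ := by
    have hlip : LipschitzWith 2 ψ := by
      apply LipschitzWith.of_dist_le_mul
      intro y y'
      rw [Real.dist_eq, abs_sub_le_iff]
      have h1 := hψlip y y'
      have h2 := hψlip y' y
      rw [dist_comm y' y] at h2
      constructor
      · push_cast
        linarith
      · push_cast
        linarith
    exact hlip.continuous
  have hCφ0 : 0 ≤ Cφ := le_trans (abs_nonneg _) (hCφ 0)
  have hψbound : ∀ y, |ψ y| ≤ Cφ := by
    intro y
    rw [abs_le]
    constructor
    · have h1 : ∀ x : AddCircle (1:ℝ), -Cφ ≤ dist x y ^ 2 - φ x := by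
        intro x
        have h2 := (abs_le.1 (hCφ x)).2
        have h3 : (0:ℝ) ≤ dist x y ^ 2 := by positivity
        linarith
      exact le_ciInf h1
    · have h4 : ψ y ≤ dist y y ^ 2 - φ y := ciInf_le (hbdd y) y
      rw [dist_self] at h4
      have h5 := (abs_le.1 (hCφ y)).1
      have : (0:ℝ)^2 = 0 := by norm_num
      rw [this] at h4
      linarith
  -- measure-theoretic infrastructure
  have hmkc : Continuous (fun t : ℝ => (t : AddCircle (1:ℝ))) := AddCircle.continuous_mk' 1
  have hwper : Function.Periodic (fun x : ℝ => ((u x : ℝ) : AddCircle (1:ℝ))) 1 := by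
    intro x
    show ((u (x+1) : ℝ) : AddCircle (1:ℝ)) = ((u x : ℝ) : AddCircle (1:ℝ))
    rw [huadd]
    have := circle_coe_sub_int (u x + 1) 1
    simpa using this
  have hTlift : T = hwper.lift := by
    funext z
    induction z using QuotientAddGroup.induction_on with
    | H w => rw [hT w]; rfl
  have hTcont : Continuous T := by
    rw [hTlift]
    exact (hmkc.comp hucont).quotient_liftOn' _
  have hμint : ∀ (h : AddCircle (1:ℝ) → ℝ), AEStronglyMeasurable h μ →
      (∫ z, h z ∂μ) = ∫ x in (0:ℝ)..1, f x * h ((x : ℝ) : AddCircle (1:ℝ)) := by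
    intro h hh
    rw [hμ] at hh ⊢
    rw [integral_map hmkc.measurable.aemeasurable hh]
    have hd : (fun t => ENNReal.ofReal (f t))
        = (fun t => ((Real.toNNReal (f t) : ℝ≥0) : ℝ≥0∞)) := rfl
    rw [hd, integral_withDensity_eq_integral_smul hfc.measurable.real_toNNReal]
    rw [MeasureTheory.integral_Ico_eq_integral_Ioo, ← MeasureTheory.integral_Ioc_eq_integral_Ioo,
      ← intervalIntegral.integral_of_le zero_le_one]
    apply intervalIntegral.integral_congr
    intro x _
    simp only [NNReal.smul_def, Real.coe_toNNReal _ (hfpos x).le, smul_eq_mul]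
  have hμfin : IsFiniteMeasure μ := by
    rw [hμ]
    obtain ⟨Cf, hCf⟩ := isCompact_Icc.exists_bound_of_continuousOn
      (hfc.continuousOn : ContinuousOn f (Icc (0:ℝ) 1))
    constructor
    rw [Measure.map_apply hmkc.measurable MeasurableSet.univ, Set.preimage_univ,
      withDensity_apply _ MeasurableSet.univ, Measure.restrict_univ]
    have hle : (∫⁻ a in Ico (0:ℝ) 1, ENNReal.ofReal (f a))
        ≤ ∫⁻ _ in Ico (0:ℝ) 1, ENNReal.ofReal Cf := by
      apply setLIntegral_mono measurable_const
      intro x hx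
      apply ENNReal.ofReal_le_ofReal
      have := hCf x (Ico_subset_Icc_self hx)
      rw [Real.norm_eq_abs] at this
      exact le_trans (le_abs_self _) this
    calc (∫⁻ a in Ico (0:ℝ) 1, ENNReal.ofReal (f a))
        ≤ ∫⁻ _ in Ico (0:ℝ) 1, ENNReal.ofReal Cf := hle
      _ = ENNReal.ofReal Cf * volume (Ico (0:ℝ) 1) := setLIntegral_const _ _
      _ < ⊤ := by
          rw [Real.volume_Ico]
          exact ENNReal.mul_lt_top ENNReal.ofReal_lt_top ENNReal.ofReal_lt_top
  haveI := hμfin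
  have hIαs : (∫ x in (0:ℝ)..1, f x * (x - u x)^2) = I αs := by
    have hgcont2 : Continuous fun t => (Finv t - Ginv (t - αs))^2 :=
      (hFinvc.sub (hGinvc.comp (continuous_id.sub continuous_const))).pow 2
    have hcov := intervalIntegral.integral_comp_smul_deriv (a := (0:ℝ)) (b := (1:ℝ))
      (f := F) (f' := f)
      (g := fun t => (Finv t - Ginv (t - αs))^2)
      (fun x _ => hFd x) hfc.continuousOn hgcont2
    rw [hF0, hF1] at hcov
    rw [hI αs, ← hcov]
    apply intervalIntegral.integral_congr
    intro x _
    show f x * (x - u x)^2 = f x • ((fun t => (Finv t - Ginv (t - αs))^2) ∘ F) x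
    simp only [Function.comp, hF₁ x, smul_eq_mul, hu]
  -- Part C : pushforward property
  have hmap : Measure.map T μ = ν := by
    have hTmeas : Measurable T := hTcont.measurable
    have humeas : Measurable u := hucont.measurable
    ext B hB
    have hA : MeasurableSet ((fun t : ℝ => (t : AddCircle (1:ℝ))) ⁻¹' B) := hmkc.measurable hB
    set A : Set ℝ := (fun t : ℝ => (t : AddCircle (1:ℝ))) ⁻¹' B with hAdef
    have hAper : ∀ x : ℝ, x + 1 ∈ A ↔ x ∈ A := by
      intro x
      have hcoe : ((x + 1 : ℝ) : AddCircle (1:ℝ)) = ((x:ℝ) : AddCircle (1:ℝ)) := by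
        have := circle_coe_sub_int (x + 1) 1
        simpa using this
      simp only [hAdef, Set.mem_preimage, hcoe]
    set χ : ℝ → ℝ≥0∞ := A.indicator (fun _ => (1:ℝ≥0∞)) with hχdef
    have hχper : ∀ x, χ (x + 1) = χ x := by
      intro x
      by_cases hx : x ∈ A
      · rw [hχdef]
        simp only [Set.indicator_of_mem ((hAper x).2 hx), Set.indicator_of_mem hx]
      · rw [hχdef]
        simp only [Set.indicator_of_notMem (fun h => hx ((hAper x).1 h)),
          Set.indicator_of_notMem hx]
    have hL : (Measure.map T μ) B = ∫⁻ x in Ico (0:ℝ) 1, χ (u x) * ENNReal.ofReal (f x) := by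
      rw [Measure.map_apply hTmeas hB, hμ,
        Measure.map_apply hmkc.measurable (hTmeas hB)]
      have hpre : (fun t : ℝ => (t : AddCircle (1:ℝ))) ⁻¹' (T ⁻¹' B) = u ⁻¹' A := by
        ext x
        simp only [Set.mem_preimage, hAdef, hT x]
        exact Iff.rfl
      rw [hpre, withDensity_apply _ (humeas hA), Measure.restrict_restrict (humeas hA)]
      rw [← indicator_one_mul_lintegral (Ico (0:ℝ) 1) (u ⁻¹' A) (humeas hA)
        (fun x => ENNReal.ofReal (f x))]
      apply setLIntegral_congr_fun measurableSet_Ico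
      intro x _
      by_cases hx : u x ∈ A
      · simp [hχdef, Set.indicator_of_mem, hx, Set.mem_preimage]
      · simp [hχdef, Set.indicator_of_notMem, hx, Set.mem_preimage]
    have hR : ν B = ∫⁻ x in A ∩ Ico (0:ℝ) 1, ENNReal.ofReal (g x) := by
      rw [hν, Measure.map_apply hmkc.measurable hB,
        withDensity_apply _ hA, Measure.restrict_restrict hA]
    have himg : u '' Ico (0:ℝ) 1 = Ico (u 0) (u 0 + 1) := by
      have hu1 : u 1 = u 0 + 1 := by simpa using huadd 0
      apply Set.Subset.antisymm
      · rintro y ⟨x, hx, rfl⟩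
        refine ⟨humono.monotone hx.1, ?_⟩
        have : u x < u 1 := humono hx.2
        linarith
      · rintro y ⟨hy1, hy2⟩
        refine ⟨Finv (G y + αs), ⟨?_, ?_⟩, huinv y⟩
        · by_contra hneg
          push_neg at hneg
          have h9 : u (Finv (G y + αs)) < u 0 := humono hneg
          rw [huinv y] at h9
          linarith
        · by_contra hneg
          push_neg at hneg
          have h9 : u 1 ≤ u (Finv (G y + αs)) := humono.monotone hneg
          rw [huinv y] at h9
          linarith
    have hcov := lintegral_image_1d (measurableSet_Ico (a := (0:ℝ)) (b := 1))
      (fun x _ => (hud x).hasDerivWithinAt) (humono.injective.injOn)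
      (fun y => χ y * ENNReal.ofReal (g y))
    rw [himg] at hcov
    have hsimp : (∫⁻ x in Ico (0:ℝ) 1,
          ENNReal.ofReal |(g (u x))⁻¹ * f x| * (χ (u x) * ENNReal.ofReal (g (u x))))
        = ∫⁻ x in Ico (0:ℝ) 1, χ (u x) * ENNReal.ofReal (f x) := by
      apply setLIntegral_congr_fun measurableSet_Ico
      intro x _
      have h1 : (0:ℝ) ≤ (g (u x))⁻¹ * f x :=
        le_of_lt (mul_pos (inv_pos.2 (hgpos _)) (hfpos _))
      beta_reduce
      rw [abs_of_nonneg h1]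
      rw [mul_comm (ENNReal.ofReal ((g (u x))⁻¹ * f x)) (χ (u x) * ENNReal.ofReal (g (u x))),
        mul_assoc]
      congr 1
      rw [← ENNReal.ofReal_mul (hgpos (u x)).le]
      congr 1
      have h2 : g (u x) ≠ 0 := ne_of_gt (hgpos _)
      field_simp
    have hper2 : ∀ y, (fun y => χ y * ENNReal.ofReal (g y)) (y + 1)
        = (fun y => χ y * ENNReal.ofReal (g y)) y := by
      intro y
      simp only []
      rw [hχper, hgp y]
    have hwrap := wrap_lintegral (fun y => χ y * ENNReal.ofReal (g y)) hper2 (u 0)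
    rw [hL, hR]
    calc (∫⁻ x in Ico (0:ℝ) 1, χ (u x) * ENNReal.ofReal (f x))
        = ∫⁻ x in Ico (0:ℝ) 1,
            ENNReal.ofReal |(g (u x))⁻¹ * f x| * (χ (u x) * ENNReal.ofReal (g (u x))) := hsimp.symm
      _ = ∫⁻ y in Ico (u 0) (u 0 + 1), χ y * ENNReal.ofReal (g y) := hcov.symm
      _ = ∫⁻ y in Ico (0:ℝ) 1, χ y * ENNReal.ofReal (g y) := hwrap
      _ = ∫⁻ x in A ∩ Ico (0:ℝ) 1, ENNReal.ofReal (g x) :=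
          indicator_one_mul_lintegral (Ico (0:ℝ) 1) A hA _
  -- cost of T
  have hdistT : ∀ x : ℝ, dist ((x:ℝ) : AddCircle (1:ℝ)) (T ((x:ℝ) : AddCircle (1:ℝ))) ^ 2
      ≤ (x - u x)^2 := by
    intro x
    rw [hT x]
    calc dist ((x:ℝ) : AddCircle (1:ℝ)) ((u x : ℝ) : AddCircle (1:ℝ)) ^ 2
        ≤ |x - u x| ^ 2 := pow_le_pow_left₀ dist_nonneg (circle_dist_le x (u x)) 2
      _ = (x - u x)^2 := sq_abs _
  have haesm1 : AEStronglyMeasurable (fun z : AddCircle (1:ℝ) => dist z (T z)^2) μ :=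
    ((continuous_id.dist hTcont).pow 2).aestronglyMeasurable
  have hcost_le : (∫ z, dist z (T z) ^ 2 ∂μ) ≤ I αs := by
    rw [hμint _ haesm1, ← hIαs]
    apply intervalIntegral.integral_mono_on zero_le_one
      ((hfc.mul ((hmkc.dist (hTcont.comp hmkc)).pow 2)).intervalIntegrable 0 1)
      ((hfc.mul ((continuous_id.sub hucont).pow 2)).intervalIntegrable 0 1)
    intro x _
    exact mul_le_mul_of_nonneg_left (hdistT x) (hfpos x).le
  have hφψTcont : Continuous (fun z : AddCircle (1:ℝ) => φ z + ψ (T z)) :=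
    hφcont.add (hψcont.comp hTcont)
  have h6 : (∫ z, (φ z + ψ (T z)) ∂μ) = I αs := by
    rw [hμint _ hφψTcont.aestronglyMeasurable, ← hIαs]
    apply intervalIntegral.integral_congr
    intro x _
    show f x * (φ ((x:ℝ) : AddCircle (1:ℝ)) + ψ (T ((x:ℝ) : AddCircle (1:ℝ)))) = f x * (x - u x)^2
    rw [hψT x]
  have hintD : Integrable (fun z : AddCircle (1:ℝ) => dist z (T z)^2) μ := by
    apply Integrable.mono' (integrable_const (1:ℝ)) haesm1
    apply Filter.Eventually.of_forall
    intro z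
    have h1 := circle_dist_half z (T z)
    have h2 : (0:ℝ) ≤ dist z (T z) := dist_nonneg
    rw [Real.norm_eq_abs, abs_of_nonneg (by positivity)]
    nlinarith
  have hintφ : Integrable φ μ := by
    apply Integrable.mono' (integrable_const Cφ) hφcont.aestronglyMeasurable
    apply Filter.Eventually.of_forall
    intro z
    rw [Real.norm_eq_abs]
    exact hCφ z
  have hintψT : Integrable (fun z : AddCircle (1:ℝ) => ψ (T z)) μ := by
    apply Integrable.mono' (integrable_const Cφ) (hψcont.comp hTcont).aestronglyMeasurable
    apply Filter.Eventually.of_forall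
    intro z
    rw [Real.norm_eq_abs]
    exact hψbound (T z)
  have hcost_ge : I αs ≤ ∫ z, dist z (T z) ^ 2 ∂μ := by
    rw [← h6]
    apply integral_mono (hintφ.add hintψT) hintD
    intro z
    exact hψle z (T z)
  have hcost : (∫ z, dist z (T z) ^ 2 ∂μ) = I αs := le_antisymm hcost_le hcost_ge
  have hiInf : (⨅ α : ℝ, I α) = I αs :=
    le_antisymm (ciInf_le ⟨I αs, by rintro r ⟨α, rfl⟩; exact hmin α⟩ αs) (le_ciInf hmin)
  refine ⟨hmap, by rw [hcost, hiInf], ?_⟩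
  intro S hS hSmap
  have haesmS : AEStronglyMeasurable (fun z : AddCircle (1:ℝ) => dist z (S z)^2) μ :=
    ((measurable_id.dist hS).pow_const 2).aestronglyMeasurable
  have hintDS : Integrable (fun z : AddCircle (1:ℝ) => dist z (S z)^2) μ := by
    apply Integrable.mono' (integrable_const (1:ℝ)) haesmS
    apply Filter.Eventually.of_forall
    intro z
    have h1 := circle_dist_half z (S z)
    have h2 : (0:ℝ) ≤ dist z (S z) := dist_nonneg
    rw [Real.norm_eq_abs, abs_of_nonneg (by positivity)]
    nlinarith
  have hintψS : Integrable (fun z : AddCircle (1:ℝ) => ψ (S z)) μ := by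
    apply Integrable.mono' (integrable_const Cφ)
      ((hψcont.measurable.comp hS).aestronglyMeasurable)
    apply Filter.Eventually.of_forall
    intro z
    rw [Real.norm_eq_abs]
    exact hψbound (S z)
  have hψν : (∫ z, ψ (S z) ∂μ) = ∫ z, ψ (T z) ∂μ := by
    have h1 : (∫ y, ψ y ∂(Measure.map S μ)) = ∫ z, ψ (S z) ∂μ :=
      integral_map hS.aemeasurable hψcont.aestronglyMeasurable
    have h2 : (∫ y, ψ y ∂(Measure.map T μ)) = ∫ z, ψ (T z) ∂μ :=
      integral_map hTcont.measurable.aemeasurable hψcont.aestronglyMeasurable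
    rw [← h1, ← h2, hSmap, hmap]
  calc (∫ z, dist z (T z) ^ 2 ∂μ) = I αs := hcost
    _ = ∫ z, (φ z + ψ (T z)) ∂μ := h6.symm
    _ = (∫ z, φ z ∂μ) + ∫ z, ψ (T z) ∂μ := integral_add hintφ hintψT
    _ = (∫ z, φ z ∂μ) + ∫ z, ψ (S z) ∂μ := by rw [hψν]
    _ = ∫ z, (φ z + ψ (S z)) ∂μ := (integral_add hintφ hintψS).symm
    _ ≤ ∫ z, dist z (S z) ^ 2 ∂μ := integral_mono (hintφ.add hintψS) hintDS
        (fun z => hψle z (S z))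
end

section
/- Let f, g be admissible circle densities with cumulative distribution functions F, G and corresponding measures μ, ν on S¹ = ℝ/ℤ. For every α ∈ ℝ, the map T_α : S¹ → S¹ induced by t ↦ G⁻¹(F(t) − α) (taken modulo 1) satisfies (T_α)_*μ = ν, and its transport cost is bounded by the line cost: ∫₀¹ d(t mod 1, T_α(t))² f(t) dt ≤ ∫₀¹ (F⁻¹(t) − G⁻¹(t − α))² dt. -/
open MeasureTheory Set Function

section CDF
variable {f F Finv : ℝ → ℝ} {η : ℝ}

lemma cdf_sub (hfc : Continuous f) (hF : ∀ t, F t = ∫ τ in (0:ℝ)..t, f τ) (a b : ℝ) :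
    F b - F a = ∫ τ in a..b, f τ := by
  rw [hF, hF]
  exact intervalIntegral.integral_interval_sub_left
    (hfc.intervalIntegrable _ _) (hfc.intervalIntegrable _ _)

lemma cdf_strictMono_s2 (hη : 0 < η) (hfc : Continuous f) (hfl : ∀ t, η ≤ f t)
    (hF : ∀ t, F t = ∫ τ in (0:ℝ)..t, f τ) : StrictMono F := by
  intro a b hab
  have h1 : η * (b - a) ≤ ∫ τ in a..b, f τ := by
    have := intervalIntegral.integral_mono_on hab.le
      (intervalIntegrable_const (μ := volume) (c := η)) (hfc.intervalIntegrable _ _) (fun x _ => hfl x)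
    simpa [mul_comm] using this
  have h2 : F b - F a = ∫ τ in a..b, f τ := cdf_sub hfc hF a b
  nlinarith

lemma cdf_zero_s2 (hF : ∀ t, F t = ∫ τ in (0:ℝ)..t, f τ) : F 0 = 0 := by simp [hF]

lemma cdf_one_s2 (hfm : (∫ t in (0:ℝ)..1, f t) = 1)
    (hF : ∀ t, F t = ∫ τ in (0:ℝ)..t, f τ) : F 1 = 1 := by rw [hF]; exact hfm

lemma cdf_add_one_s2 (hfc : Continuous f) (hfp : Function.Periodic f 1)
    (hfm : (∫ t in (0:ℝ)..1, f t) = 1)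
    (hF : ∀ t, F t = ∫ τ in (0:ℝ)..t, f τ) (t : ℝ) : F (t + 1) = F t + 1 := by
  have h := cdf_sub hfc hF t (t + 1)
  have h2 : (∫ τ in t..(t+1), f τ) = ∫ τ in (0:ℝ)..(0+1), f τ :=
    hfp.intervalIntegral_add_eq t 0
  rw [zero_add, hfm] at h2
  linarith [h, h2]

lemma inv_mono (hη : 0 < η) (hfc : Continuous f) (hfl : ∀ t, η ≤ f t)
    (hF : ∀ t, F t = ∫ τ in (0:ℝ)..t, f τ)
    (hF₂ : Function.RightInverse Finv F) : StrictMono Finv := by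
  have hsm := cdf_strictMono_s2 hη hfc hfl hF
  intro a b hab
  by_contra h
  push_neg at h
  have := hsm.le_iff_le.mpr h
  rw [hF₂ a, hF₂ b] at this
  exact absurd this (not_le.mpr hab)

lemma inv_continuous (hη : 0 < η) (hfc : Continuous f) (hfl : ∀ t, η ≤ f t)
    (hF : ∀ t, F t = ∫ τ in (0:ℝ)..t, f τ)
    (hF₁ : Function.LeftInverse Finv F) (hF₂ : Function.RightInverse Finv F) :
    Continuous Finv :=
  (inv_mono hη hfc hfl hF hF₂).monotone.continuous_of_surjective hF₁.surjective

lemma inv_add_one (hfc : Continuous f) (hfp : Function.Periodic f 1)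
    (hfm : (∫ t in (0:ℝ)..1, f t) = 1)
    (hF : ∀ t, F t = ∫ τ in (0:ℝ)..t, f τ)
    (hF₁ : Function.LeftInverse Finv F) (hF₂ : Function.RightInverse Finv F)
    (t : ℝ) : Finv (t + 1) = Finv t + 1 := by
  have := cdf_add_one_s2 hfc hfp hfm hF (Finv t)
  rw [hF₂ t] at this
  rw [← this, hF₁]

lemma inv_add_int (hfc : Continuous f) (hfp : Function.Periodic f 1)
    (hfm : (∫ t in (0:ℝ)..1, f t) = 1)
    (hF : ∀ t, F t = ∫ τ in (0:ℝ)..t, f τ)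
    (hF₁ : Function.LeftInverse Finv F) (hF₂ : Function.RightInverse Finv F)
    (t : ℝ) (n : ℤ) : Finv (t + n) = Finv t + n := by
  induction n using Int.induction_on with
  | zero => simp
  | succ k ih =>
    push_cast
    rw [← add_assoc, inv_add_one hfc hfp hfm hF hF₁ hF₂]
    push_cast at ih
    rw [ih]; ring
  | pred k ih =>
    push_cast
    have := inv_add_one hfc hfp hfm hF hF₁ hF₂ (t + (-k - 1))
    push_cast at ih ⊢
    have h2 : t + (-↑k - 1) + 1 = t + -↑k := by ring
    rw [h2] at this
    rw [ih] at this
    linarith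

lemma withDensity_eq_map_inv (hη : 0 < η) (hfc : Continuous f) (hfl : ∀ t, η ≤ f t)
    (hF : ∀ t, F t = ∫ τ in (0:ℝ)..t, f τ)
    (hF₁ : Function.LeftInverse Finv F) (hF₂ : Function.RightInverse Finv F) :
    (volume.withDensity fun t => ENNReal.ofReal (f t)) = Measure.map Finv volume := by
  have hFinvc : Continuous Finv := inv_continuous hη hfc hfl hF hF₁ hF₂
  have hsm := cdf_strictMono_s2 hη hfc hfl hF
  have key : ∀ a b : ℝ, a ≤ b →
      (∫⁻ τ in Ioc a b, ENNReal.ofReal (f τ)) = ENNReal.ofReal (F b - F a) := by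
    intro a b hab
    have hint : (∫ τ in Ioc a b, f τ) = F b - F a := by
      rw [← intervalIntegral.integral_of_le hab, ← cdf_sub hfc hF a b]
    rw [← hint]
    rw [← ofReal_integral_eq_lintegral_ofReal
      hfc.integrableOn_Ioc
      (Filter.Eventually.of_forall fun x => (hη.trans_le (hfl x)).le)]
  refine Measure.ext_of_Ioc' _ _ (fun a b hab => ?_) (fun a b hab => ?_)
  · rw [withDensity_apply _ measurableSet_Ioc, key a b hab.le]
    exact ENNReal.ofReal_ne_top
  · rw [withDensity_apply _ measurableSet_Ioc,
      Measure.map_apply hFinvc.measurable measurableSet_Ioc, key a b hab.le]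
    have hpre : Finv ⁻¹' Ioc a b = Ioc (F a) (F b) := by
      ext x
      simp only [mem_preimage, mem_Ioc]
      constructor
      · rintro ⟨h1, h2⟩
        refine ⟨?_, ?_⟩
        · have := hsm h1; rwa [hF₂ x] at this
        · have := hsm.monotone h2; rwa [hF₂ x] at this
      · rintro ⟨h1, h2⟩
        constructor
        · have : Finv (F a) < Finv x := (inv_mono hη hfc hfl hF hF₂) h1
          rwa [hF₁ a] at this
        · have : Finv x ≤ Finv (F b) := (inv_mono hη hfc hfl hF hF₂).monotone h2
          rwa [hF₁ b] at this
    rw [hpre, Real.volume_Ioc]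

end CDF

section Circle

lemma coe_equivIoc_eq (x : AddCircle (1:ℝ)) :
    (((AddCircle.equivIoc 1 0 x : ℝ)) : AddCircle (1:ℝ)) = x :=
  (AddCircle.equivIoc 1 0).symm_apply_apply x

lemma circle_coe_eq_iff {s t : ℝ} :
    (s : AddCircle (1:ℝ)) = (t : AddCircle (1:ℝ)) ↔ ∃ n : ℤ, s = t + n := by
  rw [show ((s : AddCircle (1:ℝ)) = (t : AddCircle (1:ℝ))) ↔
      s - t ∈ AddSubgroup.zmultiples (1:ℝ) from QuotientAddGroup.eq_iff_sub_mem,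
    AddSubgroup.mem_zmultiples_iff]
  constructor
  · rintro ⟨n, hn⟩
    exact ⟨n, by simp only [zsmul_eq_mul, mul_one] at hn; linarith⟩
  · rintro ⟨n, hn⟩
    exact ⟨n, by simp only [zsmul_eq_mul, mul_one]; linarith⟩

end Circle

variable {Ginv : ℝ → ℝ}

lemma coe_Ginv_congr (hGint : ∀ (t : ℝ) (n : ℤ), Ginv (t + n) = Ginv t + n)
    {s t : ℝ} (h : (s : AddCircle (1:ℝ)) = (t : AddCircle (1:ℝ))) :
    ((Ginv s : ℝ) : AddCircle (1:ℝ)) = ((Ginv t : ℝ) : AddCircle (1:ℝ)) := by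
  obtain ⟨n, rfl⟩ := circle_coe_eq_iff.mp h
  rw [hGint t n, circle_coe_eq_iff]
  exact ⟨n, rfl⟩

noncomputable def psi (Ginv : ℝ → ℝ) : AddCircle (1:ℝ) → AddCircle (1:ℝ) :=
  fun x => ((Ginv ((AddCircle.equivIoc 1 0 x : ℝ)) : ℝ) : AddCircle (1:ℝ))

lemma psi_measurable (hGc : Continuous Ginv) : Measurable (psi Ginv) := by
  unfold psi
  exact (AddCircle.measurable_mk'.comp
    (hGc.measurable.comp ((AddCircle.measurableEquivIoc 1 0).measurable.subtype_coe)))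

lemma psi_coe (hGint : ∀ (t : ℝ) (n : ℤ), Ginv (t + n) = Ginv t + n) (t : ℝ) :
    psi Ginv ((t : ℝ) : AddCircle (1:ℝ)) = ((Ginv t : ℝ) : AddCircle (1:ℝ)) :=
  coe_Ginv_congr hGint (coe_equivIoc_eq _)

lemma map_mk_Ico_eq_volume :
    Measure.map (fun t : ℝ => (t : AddCircle (1:ℝ))) (volume.restrict (Set.Ico (0:ℝ) 1)) =
      volume := by
  rw [Measure.restrict_congr_set Ico_ae_eq_Ioc]
  have := (AddCircle.measurePreserving_mk 1 0).map_eq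
  simpa using this

lemma map_mk_sub_Ico_eq_volume (α : ℝ) :
    Measure.map (fun t : ℝ => ((t - α : ℝ) : AddCircle (1:ℝ))) (volume.restrict (Set.Ico (0:ℝ) 1)) =
      volume := by
  have h1 : (fun t : ℝ => ((t - α : ℝ) : AddCircle (1:ℝ))) =
      (fun x : AddCircle (1:ℝ) => (((-α : ℝ) : AddCircle (1:ℝ))) + x) ∘
        (fun t : ℝ => (t : AddCircle (1:ℝ))) := by
    funext t
    simp only [comp_apply, ← AddCircle.coe_add]
    ring_nf
  rw [h1, ← Measure.map_map (measurable_const_add _) AddCircle.measurable_mk',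
    map_mk_Ico_eq_volume]
  exact MeasureTheory.map_add_left_eq_self _ _

lemma addCircle_dist_le (a b : ℝ) :
    dist ((a : ℝ) : AddCircle (1:ℝ)) ((b : ℝ) : AddCircle (1:ℝ)) ≤ |a - b| := by
  rw [dist_eq_norm, ← AddCircle.coe_sub]
  simpa [Real.norm_eq_abs] using QuotientAddGroup.norm_mk_le_norm (S := AddSubgroup.zmultiples (1:ℝ)) (m := a - b)

lemma continuous_coe_circle : Continuous (fun t : ℝ => (t : AddCircle (1:ℝ))) :=
  AddCircle.continuous_mk' 1


lemma map_density_eq {f F Finv : ℝ → ℝ} {η : ℝ} (hη : 0 < η) (hfc : Continuous f)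
    (hfl : ∀ t, η ≤ f t) (hfm : (∫ t in (0:ℝ)..1, f t) = 1)
    (hF : ∀ t, F t = ∫ τ in (0:ℝ)..t, f τ)
    (hF₁ : Function.LeftInverse Finv F) (hF₂ : Function.RightInverse Finv F) :
    Measure.map (fun t : ℝ => (t : AddCircle (1:ℝ)))
      ((volume.restrict (Set.Ico (0:ℝ) 1)).withDensity fun t => ENNReal.ofReal (f t)) =
    Measure.map (fun t : ℝ => ((Finv t : ℝ) : AddCircle (1:ℝ)))
      (volume.restrict (Set.Ico (0:ℝ) 1)) := by
  have hFinvc : Continuous Finv := inv_continuous hη hfc hfl hF hF₁ hF₂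
  have hFinvm : StrictMono Finv := inv_mono hη hfc hfl hF hF₂
  have hFinv0 : Finv 0 = 0 := by
    have := hF₁ 0; rwa [cdf_zero_s2 hF] at this
  have hFinv1 : Finv 1 = 1 := by
    have := hF₁ 1; rwa [cdf_one_s2 hfm hF] at this
  have hpre : Finv ⁻¹' Set.Ico (0:ℝ) 1 = Set.Ico (0:ℝ) 1 := by
    ext x
    simp only [mem_preimage, mem_Ico]
    rw [show (0:ℝ) ≤ Finv x ↔ 0 ≤ x from by
        nth_rewrite 1 [← hFinv0]; exact hFinvm.le_iff_le,
      show Finv x < 1 ↔ x < 1 from by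
        nth_rewrite 1 [← hFinv1]; exact hFinvm.lt_iff_lt]
  rw [← restrict_withDensity measurableSet_Ico,
    withDensity_eq_map_inv hη hfc hfl hF hF₁ hF₂,
    Measure.restrict_map hFinvc.measurable measurableSet_Ico, hpre,
    Measure.map_map continuous_coe_circle.measurable hFinvc.measurable]
  rfl

/-- For every α ∈ ℝ, the circle map induced by t ↦ G⁻¹(F(t) − α) pushes μ
forward to ν, and its transport cost is bounded by the corresponding line cost. -/
theorem circle_map_pushforward_and_cost_le_line_cost
    (f g F G Finv Ginv : ℝ → ℝ) (η : ℝ) (hη : 0 < η)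
    (hfc : Continuous f) (hgc : Continuous g)
    (hfp : Function.Periodic f 1) (hgp : Function.Periodic g 1)
    (hfl : ∀ t, η ≤ f t) (hgl : ∀ t, η ≤ g t)
    (hfm : (∫ t in (0:ℝ)..1, f t) = 1) (hgm : (∫ t in (0:ℝ)..1, g t) = 1)
    (hF : ∀ t, F t = ∫ τ in (0:ℝ)..t, f τ) (hG : ∀ t, G t = ∫ τ in (0:ℝ)..t, g τ)
    (hF₁ : Function.LeftInverse Finv F) (hF₂ : Function.RightInverse Finv F)
    (hG₁ : Function.LeftInverse Ginv G) (hG₂ : Function.RightInverse Ginv G)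
    (μ ν : Measure (AddCircle (1:ℝ)))
    (hμ : μ = Measure.map (fun t : ℝ => (t : AddCircle (1:ℝ)))
      ((volume.restrict (Set.Ico (0:ℝ) 1)).withDensity fun t => ENNReal.ofReal (f t)))
    (hν : ν = Measure.map (fun t : ℝ => (t : AddCircle (1:ℝ)))
      ((volume.restrict (Set.Ico (0:ℝ) 1)).withDensity fun t => ENNReal.ofReal (g t)))
    (α : ℝ) (T : AddCircle (1:ℝ) → AddCircle (1:ℝ))
    (hT : ∀ t : ℝ, T (t : AddCircle (1:ℝ)) = ((Ginv (F t - α) : ℝ) : AddCircle (1:ℝ))) :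
    Measure.map T μ = ν ∧
      (∫ t in (0:ℝ)..1, dist ((t : ℝ) : AddCircle (1:ℝ)) (T ((t : ℝ) : AddCircle (1:ℝ))) ^ 2 * f t)
        ≤ ∫ t in (0:ℝ)..1, (Finv t - Ginv (t - α)) ^ 2 := by
  have hFinvc : Continuous Finv := inv_continuous hη hfc hfl hF hF₁ hF₂
  have hGinvc : Continuous Ginv := inv_continuous hη hgc hgl hG hG₁ hG₂
  have hFcont : Continuous F := by
    have : F = fun t => ∫ τ in (0:ℝ)..t, f τ := funext hF
    rw [this]
    exact intervalIntegral.continuous_primitive (fun a b => hfc.intervalIntegrable a b) 0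
  have hGint : ∀ (t : ℝ) (n : ℤ), Ginv (t + n) = Ginv t + n :=
    inv_add_int hgc hgp hgm hG hG₁ hG₂
  -- measurability of T
  have hTeq : T = fun x => ((Ginv (F ((AddCircle.equivIoc 1 0 x : ℝ)) - α) : ℝ) :
      AddCircle (1:ℝ)) := by
    funext x
    conv_lhs => rw [← coe_equivIoc_eq x]
    exact hT _
  have hTm : Measurable T := by
    rw [hTeq]
    exact continuous_coe_circle.measurable.comp
      ((hGinvc.comp ((hFcont.comp continuous_subtype_val).sub continuous_const)).measurable.comp
        (AddCircle.measurableEquivIoc 1 0).measurable)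
  constructor
  · -- pushforward
    rw [hμ, hν, map_density_eq hη hfc hfl hfm hF hF₁ hF₂,
      map_density_eq hη hgc hgl hgm hG hG₁ hG₂]
    rw [Measure.map_map hTm (show Measurable (fun t : ℝ => ((Finv t : ℝ) : AddCircle (1:ℝ))) from (continuous_coe_circle.comp hFinvc).measurable)]
    have h1 : (T ∘ fun t : ℝ => ((Finv t : ℝ) : AddCircle (1:ℝ))) =
        fun t : ℝ => ((Ginv (t - α) : ℝ) : AddCircle (1:ℝ)) := by
      funext t
      simp only [comp_apply, hT (Finv t), hF₂ t]
    rw [h1]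
    have h2 : (fun t : ℝ => ((Ginv (t - α) : ℝ) : AddCircle (1:ℝ))) =
        psi Ginv ∘ (fun t : ℝ => ((t - α : ℝ) : AddCircle (1:ℝ))) := by
      funext t
      simp only [comp_apply, psi_coe hGint]
    have h3 : (fun t : ℝ => ((Ginv t : ℝ) : AddCircle (1:ℝ))) =
        psi Ginv ∘ (fun t : ℝ => (t : AddCircle (1:ℝ))) := by
      funext t
      simp only [comp_apply, psi_coe hGint]
    rw [h2, h3, ← Measure.map_map (psi_measurable hGinvc)
        (show Measurable (fun t : ℝ => ((t - α : ℝ) : AddCircle (1:ℝ))) from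
          (continuous_coe_circle.comp (continuous_id.sub continuous_const)).measurable),
      ← Measure.map_map (psi_measurable hGinvc) continuous_coe_circle.measurable,
      map_mk_sub_Ico_eq_volume, map_mk_Ico_eq_volume]
  · -- cost bound
    set h : ℝ → ℝ := fun s =>
      dist ((Finv s : ℝ) : AddCircle (1:ℝ)) ((Ginv (s - α) : ℝ) : AddCircle (1:ℝ)) ^ 2 with hh
    have hhc : Continuous h :=
      ((continuous_coe_circle.comp hFinvc).dist
        (continuous_coe_circle.comp (hGinvc.comp (continuous_id.sub continuous_const)))).pow 2
    have step1 : (∫ t in (0:ℝ)..1,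
        dist ((t : ℝ) : AddCircle (1:ℝ)) (T ((t : ℝ) : AddCircle (1:ℝ))) ^ 2 * f t)
        = ∫ t in (0:ℝ)..1, f t • (h ∘ F) t := by
      apply intervalIntegral.integral_congr
      intro t _
      simp only [hh, comp_apply, hT t, hF₁ t, smul_eq_mul]
      ring
    have hFd : ∀ x ∈ uIcc (0:ℝ) 1, HasDerivAt F (f x) x := by
      intro x _
      have : F = fun t => ∫ τ in (0:ℝ)..t, f τ := funext hF
      rw [this]
      exact (hfc.integral_hasStrictDerivAt 0 x).hasDerivAt
    have step2 : (∫ t in (0:ℝ)..1, f t • (h ∘ F) t) = ∫ s in (F 0)..(F 1), h s :=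
      intervalIntegral.integral_comp_smul_deriv hFd hfc.continuousOn hhc
    rw [step1, step2, cdf_zero_s2 hF, cdf_one_s2 hfm hF]
    apply intervalIntegral.integral_mono_on zero_le_one
      (hhc.intervalIntegrable _ _)
      (((hFinvc.sub (hGinvc.comp (continuous_id.sub continuous_const))).pow 2).intervalIntegrable _ _)
    intro s _
    have hd : dist ((Finv s : ℝ) : AddCircle (1:ℝ)) ((Ginv (s - α) : ℝ) : AddCircle (1:ℝ))
        ≤ |Finv s - Ginv (s - α)| := addCircle_dist_le _ _
    have h0 : (0:ℝ) ≤ dist ((Finv s : ℝ) : AddCircle (1:ℝ))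
        ((Ginv (s - α) : ℝ) : AddCircle (1:ℝ)) := dist_nonneg
    calc h s ≤ |Finv s - Ginv (s - α)| ^ 2 := by
          simp only [hh]; exact pow_le_pow_left₀ h0 hd 2
      _ = (Finv s - Ginv (s - α)) ^ 2 := sq_abs _
end

section
/- Let f, g be admissible circle densities with cumulative distribution functions F, G and define I(α) = ∫₀¹ (F⁻¹(t) − G⁻¹(t − α))² dt for α ∈ ℝ. Then I is strictly convex on ℝ: for all α₁ ≠ α₂ and all s ∈ (0,1), I(s α₁ + (1−s) α₂) < s I(α₁) + (1−s) I(α₂). -/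
open MeasureTheory Set Function


lemma cdf_inv_pack (f F Finv : ℝ → ℝ) (η : ℝ) (hη : 0 < η)
    (hfc : Continuous f) (hfp : Function.Periodic f 1)
    (hfl : ∀ t, η ≤ f t) (hfm : (∫ t in (0:ℝ)..1, f t) = 1)
    (hF : ∀ t, F t = ∫ τ in (0:ℝ)..t, f τ)
    (hF₁ : Function.LeftInverse Finv F) (hF₂ : Function.RightInverse Finv F) :
    (∀ u, HasDerivAt Finv ((f (Finv u))⁻¹) u) ∧ StrictMono Finv ∧
      (∀ u, Finv (u + 1) = Finv u + 1) := by
  have hfpos : ∀ t, 0 < f t := fun t => lt_of_lt_of_le hη (hfl t)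
  -- F b - F a = ∫ a..b f
  have hFsub : ∀ a b : ℝ, F b - F a = ∫ τ in a..b, f τ := by
    intro a b
    rw [hF, hF]
    exact intervalIntegral.integral_interval_sub_left
      (hfc.intervalIntegrable 0 b) (hfc.intervalIntegrable 0 a)
  have hFmono : StrictMono F := by
    intro a b hab
    have h1 : η * (b - a) ≤ ∫ τ in a..b, f τ := by
      have := intervalIntegral.integral_mono_on (le_of_lt hab)
        (_root_.intervalIntegrable_const (μ := volume) (c := η)) (hfc.intervalIntegrable _ _)
        (fun x _ => hfl x)
      simpa [mul_comm] using this
    nlinarith [hFsub a b]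
  have hFderiv : ∀ t, HasDerivAt F (f t) t := by
    intro t
    have h : HasDerivAt (fun u => ∫ τ in (0:ℝ)..u, f τ) (f t) t :=
      intervalIntegral.integral_hasDerivAt_right (hfc.intervalIntegrable _ _)
        (hfc.stronglyMeasurableAtFilter _ _) hfc.continuousAt
    have : F = fun u => ∫ τ in (0:ℝ)..u, f τ := funext hF
    rw [this]; exact h
  have hFsurj : Function.Surjective F := fun y => ⟨Finv y, hF₂ y⟩
  have hFinvmono : StrictMono Finv := by
    intro a b hab
    by_contra h
    push_neg at h
    have : F (Finv b) ≤ F (Finv a) := hFmono.monotone h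
    rw [hF₂, hF₂] at this; linarith
  have hFinvcont : Continuous Finv := by
    let e := StrictMono.orderIsoOfSurjective F hFmono hFsurj
    have he : Finv = ⇑e.symm := by
      funext x
      have hcoe : ⇑e = F := StrictMono.coe_orderIsoOfSurjective F hFmono hFsurj
      have h1 : F (e.symm x) = x := by
        rw [← hcoe]; exact e.apply_symm_apply x
      calc Finv x = Finv (F (e.symm x)) := by rw [h1]
        _ = e.symm x := hF₁ _
    rw [he]; exact e.symm.continuous
  have hFinvderiv : ∀ u, HasDerivAt Finv ((f (Finv u))⁻¹) u := by
    intro u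
    exact HasDerivAt.of_local_left_inverse hFinvcont.continuousAt
      (hFderiv (Finv u)) (ne_of_gt (hfpos _)) (Filter.Eventually.of_forall hF₂)
  have hFper : ∀ t, F (t + 1) = F t + 1 := by
    intro t
    have h1 : F (t + 1) - F t = ∫ τ in t..t+1, f τ := hFsub t (t + 1)
    have h2 : (∫ τ in t..t+1, f τ) = ∫ τ in (0:ℝ)..0+1, f τ :=
      hfp.intervalIntegral_add_eq t 0
    simp only [zero_add] at h2
    rw [h2, hfm] at h1; linarith
  have hFinvper : ∀ u, Finv (u + 1) = Finv u + 1 := by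
    intro u
    have : F (Finv u + 1) = u + 1 := by rw [hFper, hF₂]
    calc Finv (u + 1) = Finv (F (Finv u + 1)) := by rw [this]
      _ = Finv u + 1 := hF₁ _
  exact ⟨hFinvderiv, hFinvmono, hFinvper⟩



/-- I(α) = ∫₀¹ (F⁻¹(t) − G⁻¹(t − α))² dt is strictly convex on ℝ. -/
theorem I_strictly_convex
    (f g F G Finv Ginv : ℝ → ℝ) (η : ℝ) (hη : 0 < η)
    (hfc : Continuous f) (hgc : Continuous g)
    (hfp : Function.Periodic f 1) (hgp : Function.Periodic g 1)
    (hfl : ∀ t, η ≤ f t) (hgl : ∀ t, η ≤ g t)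
    (hfm : (∫ t in (0:ℝ)..1, f t) = 1) (hgm : (∫ t in (0:ℝ)..1, g t) = 1)
    (hF : ∀ t, F t = ∫ τ in (0:ℝ)..t, f τ) (hG : ∀ t, G t = ∫ τ in (0:ℝ)..t, g τ)
    (hF₁ : Function.LeftInverse Finv F) (hF₂ : Function.RightInverse Finv F)
    (hG₁ : Function.LeftInverse Ginv G) (hG₂ : Function.RightInverse Ginv G)
    (I : ℝ → ℝ) (hI : ∀ α, I α = ∫ t in (0:ℝ)..1, (Finv t - Ginv (t - α)) ^ 2) :
    ∀ α₁ α₂ : ℝ, α₁ ≠ α₂ → ∀ s ∈ Set.Ioo (0:ℝ) 1,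
      I (s * α₁ + (1 - s) * α₂) < s * I α₁ + (1 - s) * I α₂ := by
  obtain ⟨hFinvderiv, hFinvmono, hFinvper⟩ :=
    cdf_inv_pack f F Finv η hη hfc hfp hfl hfm hF hF₁ hF₂
  obtain ⟨hGinvderiv, hGinvmono, hGinvper⟩ :=
    cdf_inv_pack g G Ginv η hη hgc hgp hgl hgm hG hG₁ hG₂
  have hfpos : ∀ t, 0 < f t := fun t => lt_of_lt_of_le hη (hfl t)
  have hgpos : ∀ t, 0 < g t := fun t => lt_of_lt_of_le hη (hgl t)
  have hFinvcont : Continuous Finv :=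
    continuous_iff_continuousAt.2 fun u => (hFinvderiv u).continuousAt
  have hGinvcont : Continuous Ginv :=
    continuous_iff_continuousAt.2 fun u => (hGinvderiv u).continuousAt
  -- continuity of the two "derivative density" factors
  have hfinv_cont : Continuous fun u => (f (Finv u))⁻¹ :=
    (hfc.comp hFinvcont).inv₀ fun u => (hfpos _).ne'
  have hginv_cont : Continuous fun u => (g (Ginv u))⁻¹ :=
    (hgc.comp hGinvcont).inv₀ fun u => (hgpos _).ne'
  -- Step 1: representation I α = ∫₀¹ (Finv (t+α) - Ginv t)²
  have Irep : ∀ α, I α = ∫ t in (0:ℝ)..1, (Finv (t + α) - Ginv t) ^ 2 := by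
    intro α
    have hper : Function.Periodic (fun t => (Finv t - Ginv (t - α)) ^ 2) 1 := by
      intro t
      simp only
      have h1 : Finv (t + 1) = Finv t + 1 := hFinvper t
      have h2 : Ginv (t + 1 - α) = Ginv (t - α) + 1 := by
        have : t + 1 - α = (t - α) + 1 := by ring
        rw [this, hGinvper]
      rw [h1, h2]; ring
    have h3 : (∫ t in (0:ℝ)..0+1, (Finv t - Ginv (t - α)) ^ 2)
        = ∫ t in α..α+1, (Finv t - Ginv (t - α)) ^ 2 := hper.intervalIntegral_add_eq 0 α
    have h4 : (∫ t in (0:ℝ)..1, (Finv (t + α) - Ginv (t + α - α)) ^ 2)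
        = ∫ t in (0+α)..(1+α), (Finv t - Ginv (t - α)) ^ 2 :=
      intervalIntegral.integral_comp_add_right (fun t => (Finv t - Ginv (t - α)) ^ 2) α
    rw [hI α]
    simp only [zero_add] at h3
    rw [h3]
    have h5 : (∫ t in α..α+1, (Finv t - Ginv (t - α)) ^ 2)
        = ∫ t in (0:ℝ)..1, (Finv (t + α) - Ginv (t + α - α)) ^ 2 := by
      rw [h4]; congr 1 <;> ring
    rw [h5]
    congr 1
    funext t
    congr 3
    ring
  -- φ : the derivative of I
  set φ : ℝ → ℝ := fun x => ∫ t in (0:ℝ)..1, 2 * (Finv (t + x) - Ginv t) * (g (Ginv t))⁻¹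
    with hφdef
  -- the integrand of φ is continuous and integrable
  have hφint_cont : ∀ x : ℝ, Continuous fun t => 2 * (Finv (t + x) - Ginv t) * (g (Ginv t))⁻¹ :=
    fun x => (continuous_const.mul ((hFinvcont.comp (continuous_id.add continuous_const)).sub
      hGinvcont)).mul hginv_cont
  -- Step 2: I has derivative φ x at every x
  have hIderiv : ∀ x₀ : ℝ, HasDerivAt I (φ x₀) x₀ := by
    intro x₀
    -- derivative via differentiation under the integral sign
    set F' : ℝ → ℝ → ℝ := fun x t => 2 * (Finv (t + x) - Ginv t) * (f (Finv (t + x)))⁻¹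
      with hF'def
    set A : ℝ := |Finv (x₀ - 1)| + |Finv (x₀ + 3)| + (|Ginv 0| + |Ginv 1|) with hA
    set C : ℝ := 2 * A * η⁻¹ with hC
    have hball : ∀ t ∈ Set.uIoc (0:ℝ) 1, ∀ x ∈ Metric.ball x₀ (1:ℝ),
        |Finv (t + x) - Ginv t| ≤ A := by
      intro t ht x hx
      rw [Set.uIoc_of_le (by norm_num : (0:ℝ) ≤ 1)] at ht
      rw [Metric.mem_ball, Real.dist_eq, abs_lt] at hx
      have ht1 : 0 < t := ht.1
      have ht2 : t ≤ 1 := ht.2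
      have hlo : Finv (x₀ - 1) ≤ Finv (t + x) := hFinvmono.monotone (by linarith)
      have hhi : Finv (t + x) ≤ Finv (x₀ + 3) := hFinvmono.monotone (by linarith)
      have hglo : Ginv 0 ≤ Ginv t := hGinvmono.monotone (by linarith)
      have hghi : Ginv t ≤ Ginv 1 := hGinvmono.monotone (by linarith)
      have e1 := le_abs_self (Finv (x₀ + 3))
      have e2 := neg_abs_le (Finv (x₀ - 1))
      have e3 := le_abs_self (Ginv 1)
      have e4 := neg_abs_le (Ginv 0)
      have e5 := abs_nonneg (Finv (x₀ - 1))
      have e6 := abs_nonneg (Finv (x₀ + 3))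
      have e7 := abs_nonneg (Ginv 0)
      have e8 := abs_nonneg (Ginv 1)
      rw [abs_le, hA]
      constructor <;> linarith
    have key := intervalIntegral.hasDerivAt_integral_of_dominated_loc_of_deriv_le
      (μ := volume) (F := fun x t => (Finv (t + x) - Ginv t) ^ 2) (F' := F')
      (x₀ := x₀) (a := 0) (b := 1) (bound := fun _ => C) (s := Metric.ball x₀ 1) (Metric.ball_mem_nhds x₀ one_pos)
      (Filter.Eventually.of_forall fun x =>
        (((hFinvcont.comp (continuous_id.add continuous_const)).sub hGinvcont).pow
          2).aestronglyMeasurable)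
      ((((hFinvcont.comp (continuous_id.add continuous_const)).sub hGinvcont).pow
          2).intervalIntegrable 0 1)
      (((continuous_const.mul ((hFinvcont.comp (continuous_id.add continuous_const)).sub
          hGinvcont)).mul (hfinv_cont.comp
          (continuous_id.add continuous_const))).aestronglyMeasurable)
      (Filter.Eventually.of_forall fun t ht x hx => by
        have hb := hball t ht x hx
        have hfi : 0 < (f (Finv (t + x)))⁻¹ := inv_pos.2 (hfpos _)
        have hfi' : (f (Finv (t + x)))⁻¹ ≤ η⁻¹ := by
          apply inv_anti₀ hη (hfl _)
        have hAnn : (0:ℝ) ≤ A := le_trans (abs_nonneg _) hb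
        rw [hF'def]
        simp only [Real.norm_eq_abs]
        rw [abs_mul, abs_mul, abs_two, abs_of_pos hfi]
        rw [hC]
        have hηinv : (0:ℝ) < η⁻¹ := inv_pos.2 hη
        nlinarith [abs_nonneg (Finv (t + x) - Ginv t)])
      (intervalIntegrable_const)
      (Filter.Eventually.of_forall fun t ht x hx => by
        have h1 : HasDerivAt (fun y : ℝ => t + y) 1 x := by
          simpa using (hasDerivAt_id x).const_add t
        have h2 : HasDerivAt (fun y : ℝ => Finv (t + y)) ((f (Finv (t + x)))⁻¹ * 1) x :=
          (hFinvderiv (t + x)).comp x h1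
        have h3 := (h2.sub_const (Ginv t)).pow 2
        refine h3.congr_deriv ?_
        show _ = 2 * (Finv (t + x) - Ginv t) * (f (Finv (t + x)))⁻¹
        norm_num)
    have hIfun : I = fun x => ∫ t in (0:ℝ)..1, (Finv (t + x) - Ginv t) ^ 2 := funext Irep
    have hkey2 := key.2
    rw [← hIfun] at hkey2
    -- now identify ∫ F' x₀ with φ x₀
    have hswap : (∫ t in (0:ℝ)..1, F' x₀ t) = φ x₀ := by
      set W : ℝ → ℝ := fun t =>
        2 * (Finv (t + x₀) - Ginv t) * ((f (Finv (t + x₀)))⁻¹ - (g (Ginv t))⁻¹) with hW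
      have hWderiv : ∀ t ∈ Set.uIcc (0:ℝ) 1,
          HasDerivAt (fun t => (Finv (t + x₀) - Ginv t) ^ 2) (W t) t := by
        intro t _
        have h1 : HasDerivAt (fun y : ℝ => y + x₀) 1 t := by
          simpa using (hasDerivAt_id t).add_const x₀
        have h2 : HasDerivAt (fun y : ℝ => Finv (y + x₀)) ((f (Finv (t + x₀)))⁻¹ * 1) t :=
          (hFinvderiv (t + x₀)).comp t h1
        have h3 := (h2.sub (hGinvderiv t)).pow 2
        refine h3.congr_deriv ?_
        show _ = 2 * (Finv (t + x₀) - Ginv t) * ((f (Finv (t + x₀)))⁻¹ - (g (Ginv t))⁻¹)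
        norm_num
      have hWcont : Continuous W :=
        (continuous_const.mul ((hFinvcont.comp (continuous_id.add continuous_const)).sub
          hGinvcont)).mul ((hfinv_cont.comp (continuous_id.add continuous_const)).sub hginv_cont)
      have hWint : (∫ t in (0:ℝ)..1, W t)
          = (Finv (1 + x₀) - Ginv 1) ^ 2 - (Finv (0 + x₀) - Ginv 0) ^ 2 :=
        intervalIntegral.integral_eq_sub_of_hasDerivAt hWderiv (hWcont.intervalIntegrable 0 1)
      have hzero : (∫ t in (0:ℝ)..1, W t) = 0 := by
        rw [hWint]
        have e1 : Finv (1 + x₀) = Finv x₀ + 1 := by rw [add_comm]; exact hFinvper x₀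
        have e2 : Ginv (1:ℝ) = Ginv 0 + 1 := by
          have := hGinvper 0; simpa using this
        rw [e1, e2]
        simp only [zero_add]
        ring
      have hc1 : Continuous fun t => 2 * (Finv (t + x₀) - Ginv t) * (f (Finv (t + x₀)))⁻¹ :=
        (continuous_const.mul ((hFinvcont.comp (continuous_id.add continuous_const)).sub
          hGinvcont)).mul (hfinv_cont.comp (continuous_id.add continuous_const))
      have hsub : (∫ t in (0:ℝ)..1, F' x₀ t) - φ x₀ = ∫ t in (0:ℝ)..1, W t :=
        calc (∫ t in (0:ℝ)..1, F' x₀ t) - φ x₀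
            = ∫ t in (0:ℝ)..1,
                (F' x₀ t - 2 * (Finv (t + x₀) - Ginv t) * (g (Ginv t))⁻¹) :=
              (intervalIntegral.integral_sub (hc1.intervalIntegrable 0 1)
                ((hφint_cont x₀).intervalIntegrable 0 1)).symm
          _ = ∫ t in (0:ℝ)..1, W t := by
              apply intervalIntegral.integral_congr
              intro t _
              simp only [hF'def, hW]
              ring
      have := hsub.trans hzero
      linarith
    rw [hswap] at hkey2
    exact hkey2
  -- Step 3: φ is strictly monotone
  have hφmono : StrictMono φ := by
    intro x y hxy
    have hdiff : φ y - φ x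
        = ∫ t in (0:ℝ)..1, 2 * (Finv (t + y) - Finv (t + x)) * (g (Ginv t))⁻¹ :=
      calc φ y - φ x
          = ∫ t in (0:ℝ)..1, (2 * (Finv (t + y) - Ginv t) * (g (Ginv t))⁻¹
              - 2 * (Finv (t + x) - Ginv t) * (g (Ginv t))⁻¹) :=
            (intervalIntegral.integral_sub ((hφint_cont y).intervalIntegrable 0 1)
              ((hφint_cont x).intervalIntegrable 0 1)).symm
        _ = ∫ t in (0:ℝ)..1, 2 * (Finv (t + y) - Finv (t + x)) * (g (Ginv t))⁻¹ := by
            apply intervalIntegral.integral_congr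
            intro t _
            ring
    have hpos : 0 < ∫ t in (0:ℝ)..1, 2 * (Finv (t + y) - Finv (t + x)) * (g (Ginv t))⁻¹ := by
      apply intervalIntegral.intervalIntegral_pos_of_pos
      · exact ((continuous_const.mul ((hFinvcont.comp (continuous_id.add continuous_const)).sub
          (hFinvcont.comp (continuous_id.add continuous_const)))).mul
          hginv_cont).intervalIntegrable 0 1
      · intro t
        have h1 : Finv (t + x) < Finv (t + y) := hFinvmono (by linarith)
        have h2 : 0 < (g (Ginv t))⁻¹ := inv_pos.2 (hgpos _)
        exact mul_pos (mul_pos two_pos (sub_pos.2 h1)) h2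
      · norm_num
    linarith
  -- Step 4: conclude strict convexity
  have hIcont : Continuous I :=
    continuous_iff_continuousAt.2 fun x => (hIderiv x).continuousAt
  have hderiveq : deriv I = φ := funext fun x => (hIderiv x).deriv
  have sc : StrictConvexOn ℝ Set.univ I := by
    apply StrictMonoOn.strictConvexOn_of_deriv convex_univ hIcont.continuousOn
    rw [interior_univ, hderiveq]
    exact hφmono.strictMonoOn _
  intro α₁ α₂ hne s hs
  have h2 : (0:ℝ) < 1 - s := by linarith [hs.2]
  have hsum : s + (1 - s) = 1 := by ring
  have := sc.2 (Set.mem_univ α₁) (Set.mem_univ α₂) hne hs.1 h2 hsum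
  simpa using this
end

section
/- Let f, g be admissible circle densities with cumulative distribution functions F, G and define I(α) = ∫₀¹ (F⁻¹(t) − G⁻¹(t − α))² dt. Then I is differentiable at every α ∈ ℝ and I′(α) = 2 ∫₀¹ F⁻¹(G(t) + α) dt − 1. -/
open MeasureTheory Set Function

/-- Basic facts about an admissible circle density, its CDF and the inverse CDF. -/
lemma density_pack (d D Dinv : ℝ → ℝ) (η : ℝ) (hη : 0 < η)
    (hdc : Continuous d) (hdp : Function.Periodic d 1) (hdl : ∀ t, η ≤ d t)
    (hdm : (∫ t in (0:ℝ)..1, d t) = 1)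
    (hD : ∀ t, D t = ∫ τ in (0:ℝ)..t, d τ)
    (hD₁ : Function.LeftInverse Dinv D) (hD₂ : Function.RightInverse Dinv D) :
    (∀ t, HasDerivAt D (d t) t) ∧ Continuous Dinv ∧
      (∀ y, HasDerivAt Dinv (d (Dinv y))⁻¹ y) ∧ (∀ t, D (t + 1) = D t + 1) ∧
      (∀ y, Dinv (y + 1) = Dinv y + 1) := by
  have hdpos : ∀ t, 0 < d t := fun t => hη.trans_le (hdl t)
  have hfun : D = fun u => ∫ τ in (0:ℝ)..u, d τ := funext hD
  have hD' : ∀ t, HasDerivAt D (d t) t := by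
    intro t
    rw [hfun]
    exact (hdc.integral_hasStrictDerivAt 0 t).hasDerivAt
  have hmono : StrictMono D := strictMono_of_hasDerivAt_pos hD' hdpos
  have hinvmono : Monotone Dinv := by
    intro y y' hyy
    by_contra h
    push_neg at h
    have := hmono h
    rw [hD₂, hD₂] at this
    exact absurd hyy (not_le.mpr this)
  have hDinvc : Continuous Dinv := hinvmono.continuous_of_surjective hD₁.surjective
  have hDinv' : ∀ y, HasDerivAt Dinv (d (Dinv y))⁻¹ y := fun y =>
    HasDerivAt.of_local_left_inverse hDinvc.continuousAt (hD' (Dinv y))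
      (ne_of_gt (hdpos _)) (Filter.Eventually.of_forall hD₂)
  have hDadd : ∀ t, D (t + 1) = D t + 1 := by
    intro t
    have hint : ∀ a b : ℝ, IntervalIntegrable d volume a b := fun a b =>
      hdc.intervalIntegrable a b
    have h1 : (∫ τ in t..(t+1), d τ) = ∫ τ in (0:ℝ)..1, d τ := by
      simpa using hdp.intervalIntegral_add_eq t 0
    have h2 : D (t+1) - D t = ∫ τ in t..(t+1), d τ := by
      rw [hD, hD, intervalIntegral.integral_interval_sub_left (hint 0 (t+1)) (hint 0 t)]
    rw [h1, hdm] at h2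
    linarith
  refine ⟨hD', hDinvc, hDinv', hDadd, fun y => ?_⟩
  have h : D (Dinv y + 1) = y + 1 := by rw [hDadd, hD₂]
  calc Dinv (y + 1) = Dinv (D (Dinv y + 1)) := by rw [h]
    _ = Dinv y + 1 := hD₁ _

/-- I is differentiable with I′(α) = 2 ∫₀¹ F⁻¹(G(t) + α) dt − 1. -/
theorem I_hasDerivAt
    (f g F G Finv Ginv : ℝ → ℝ) (η : ℝ) (hη : 0 < η)
    (hfc : Continuous f) (hgc : Continuous g)
    (hfp : Function.Periodic f 1) (hgp : Function.Periodic g 1)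
    (hfl : ∀ t, η ≤ f t) (hgl : ∀ t, η ≤ g t)
    (hfm : (∫ t in (0:ℝ)..1, f t) = 1) (hgm : (∫ t in (0:ℝ)..1, g t) = 1)
    (hF : ∀ t, F t = ∫ τ in (0:ℝ)..t, f τ) (hG : ∀ t, G t = ∫ τ in (0:ℝ)..t, g τ)
    (hF₁ : Function.LeftInverse Finv F) (hF₂ : Function.RightInverse Finv F)
    (hG₁ : Function.LeftInverse Ginv G) (hG₂ : Function.RightInverse Ginv G)
    (I : ℝ → ℝ) (hI : ∀ α, I α = ∫ t in (0:ℝ)..1, (Finv t - Ginv (t - α)) ^ 2)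
    (α : ℝ) :
    HasDerivAt I (2 * (∫ t in (0:ℝ)..1, Finv (G t + α)) - 1) α := by
  obtain ⟨hF', hFinvc, hFinv', hFadd, hFinvadd⟩ :=
    density_pack f F Finv η hη hfc hfp hfl hfm hF hF₁ hF₂
  obtain ⟨hG', hGinvc, hGinv', hGadd, hGinvadd⟩ :=
    density_pack g G Ginv η hη hgc hgp hgl hgm hG hG₁ hG₂
  have hgpos : ∀ t, 0 < g t := fun t => hη.trans_le (hgl t)
  have hgne : ∀ t, g t ≠ 0 := fun t => (hgpos t).ne'
  have hGc : Continuous G := continuous_iff_continuousAt.mpr fun t => (hG' t).continuousAt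
  -- the pointwise derivative in α
  have h_diff : ∀ (t x : ℝ),
      HasDerivAt (fun x => (Finv t - Ginv (t - x)) ^ 2)
        (2 * (Finv t - Ginv (t - x)) * (g (Ginv (t - x)))⁻¹) x := by
    intro t x
    have h1 : HasDerivAt (fun x : ℝ => t - x) (-1) x := (hasDerivAt_id x).const_sub t
    have h2 : HasDerivAt (fun x => Ginv (t - x)) ((g (Ginv (t - x)))⁻¹ * (-1)) x :=
      (hGinv' (t - x)).comp x h1
    have h3 := (h2.const_sub (Finv t)).fun_pow 2
    refine h3.congr_deriv ?_
    push_cast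
    ring
  -- local uniform bound on the derivative
  have hkc : Continuous (fun p : ℝ × ℝ => Finv p.1 - Ginv (p.1 - p.2)) :=
    (hFinvc.comp continuous_fst).sub (hGinvc.comp (continuous_fst.sub continuous_snd))
  obtain ⟨C, hC⟩ :=
    (isCompact_Icc.prod isCompact_Icc :
      IsCompact (Icc (0:ℝ) 1 ×ˢ Icc (α-1) (α+1))).exists_bound_of_continuousOn hkc.continuousOn
  -- continuity of the derivative integrand
  have hP'c : ∀ x : ℝ,
      Continuous (fun t => 2 * (Finv t - Ginv (t - x)) * (g (Ginv (t - x)))⁻¹) := by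
    intro x
    have h1 : Continuous (fun t : ℝ => Ginv (t - x)) :=
      hGinvc.comp (continuous_id.sub continuous_const)
    exact (continuous_const.mul (hFinvc.sub h1)).mul ((hgc.comp h1).inv₀ fun t => hgne _)
  have key :
      HasDerivAt (fun x => ∫ t in (0:ℝ)..1, (Finv t - Ginv (t - x)) ^ 2)
        (∫ t in (0:ℝ)..1, 2 * (Finv t - Ginv (t - α)) * (g (Ginv (t - α)))⁻¹) α := by
    refine (intervalIntegral.hasDerivAt_integral_of_dominated_loc_of_deriv_le
      (F := fun x t => (Finv t - Ginv (t - x)) ^ 2)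
      (F' := fun x t => 2 * (Finv t - Ginv (t - x)) * (g (Ginv (t - x)))⁻¹)
      (bound := fun _ => 2 * C * η⁻¹) (Metric.ball_mem_nhds α one_pos) ?_ ?_ ?_ ?_ ?_ ?_).2
    · exact Filter.Eventually.of_forall fun x =>
        (((hFinvc.sub (hGinvc.comp (continuous_id.sub continuous_const))).pow 2)).aestronglyMeasurable.restrict
    · exact ((hFinvc.sub (hGinvc.comp (continuous_id.sub continuous_const))).pow 2).intervalIntegrable 0 1
    · exact (hP'c α).aestronglyMeasurable.restrict
    · refine Filter.Eventually.of_forall fun t ht x hx => ?_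
      have ht' : t ∈ Icc (0:ℝ) 1 := by
        rw [Set.uIoc_of_le (by norm_num : (0:ℝ) ≤ 1)] at ht
        exact Ioc_subset_Icc_self ht
      have hx' : x ∈ Icc (α-1) (α+1) := by
        have := Metric.mem_ball.mp hx
        rw [Real.dist_eq, abs_sub_lt_iff] at this
        constructor <;> linarith [this.1, this.2]
      have hCx := hC (t, x) ⟨ht', hx'⟩
      have hCnn : (0:ℝ) ≤ C := le_trans (norm_nonneg _) hCx
      have hb : |(g (Ginv (t - x)))⁻¹| ≤ η⁻¹ := by
        rw [abs_of_nonneg (inv_nonneg.mpr (hgpos _).le)]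
        exact inv_anti₀ hη (hgl _)
      calc ‖2 * (Finv t - Ginv (t - x)) * (g (Ginv (t - x)))⁻¹‖
          = 2 * |Finv t - Ginv (t - x)| * |(g (Ginv (t - x)))⁻¹| := by
            rw [Real.norm_eq_abs, abs_mul, abs_mul]; norm_num
        _ ≤ 2 * C * η⁻¹ := by
            have : |Finv t - Ginv (t - x)| ≤ C := hCx
            gcongr
    · exact intervalIntegrable_const
    · exact Filter.Eventually.of_forall fun t _ x _ => h_diff t x
  have hIfun : I = fun x => ∫ t in (0:ℝ)..1, (Finv t - Ginv (t - x)) ^ 2 := funext hI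
  rw [hIfun]
  -- it remains to identify the value of the derivative
  have hval : (∫ t in (0:ℝ)..1, 2 * (Finv t - Ginv (t - α)) * (g (Ginv (t - α)))⁻¹)
      = 2 * (∫ t in (0:ℝ)..1, Finv (G t + α)) - 1 := by
    set a := Ginv (-α) with ha
    have e0 : G a + α = 0 := by rw [hG₂]; ring
    have e1 : G (a + 1) + α = 1 := by
      have h : a + 1 = Ginv (-α + 1) := (hGinvadd (-α)).symm
      rw [h, hG₂]; ring
    have hφ : ∀ s ∈ uIcc a (a+1), HasDerivAt (fun s => G s + α) (g s) s :=
      fun s _ => (hG' s).add_const α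
    have hsub := intervalIntegral.integral_comp_smul_deriv hφ hgc.continuousOn (hP'c α)
    simp only [Function.comp] at hsub
    rw [e0, e1] at hsub
    have hsub2 : ∀ s : ℝ,
        g s • (2 * (Finv (G s + α) - Ginv (G s + α - α)) * (g (Ginv (G s + α - α)))⁻¹)
          = 2 * (Finv (G s + α) - s) := by
      intro s
      have h5 : G s + α - α = G s := by ring
      rw [smul_eq_mul, h5, hG₁ s]
      field_simp
      exact mul_div_cancel_left₀ _ (hgne s)
    rw [intervalIntegral.integral_congr (fun s _ => hsub2 s)] at hsub
    have hψ : Function.Periodic (fun s => 2 * (Finv (G s + α) - s)) 1 := by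
      intro s
      simp only
      rw [hGadd s, show G s + 1 + α = (G s + α) + 1 by ring, hFinvadd]
      ring
    have hper := hψ.intervalIntegral_add_eq a 0
    rw [zero_add] at hper
    have hFGc : Continuous (fun s => Finv (G s + α)) :=
      hFinvc.comp (hGc.add continuous_const)
    rw [← hsub, hper]
    have hsplit : (∫ s in (0:ℝ)..1, 2 * (Finv (G s + α) - s))
        = 2 * ((∫ s in (0:ℝ)..1, Finv (G s + α)) - ∫ s in (0:ℝ)..1, s) := by
      rw [intervalIntegral.integral_const_mul,
        intervalIntegral.integral_sub (hFGc.intervalIntegrable 0 1)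
          (continuous_id'.intervalIntegrable 0 1)]
    rw [hsplit, integral_id]
    ring
  rw [← hval]
  exact key
end

section
/- Let f, g be admissible circle densities with cumulative distribution functions F, G and define I(α) = ∫₀¹ (F⁻¹(t) − G⁻¹(t − α))² dt. Then I attains its global minimum over ℝ at a unique point α*, and this minimizer satisfies α* ∈ (−1, 1). -/
open MeasureTheory Set Function

theorem cd_hasDerivAt {f F : ℝ → ℝ} (hfc : Continuous f)
    (hF : ∀ t, F t = ∫ τ in (0:ℝ)..t, f τ) (t : ℝ) : HasDerivAt F (f t) t := by
  have h := (hfc.integral_hasStrictDerivAt 0 t).hasDerivAt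
  exact h.congr_of_eventuallyEq (Filter.Eventually.of_forall fun x => hF x)

theorem cd_add {f F : ℝ → ℝ} (hfc : Continuous f) (hfp : Function.Periodic f 1)
    (hfm : (∫ t in (0:ℝ)..1, f t) = 1)
    (hF : ∀ t, F t = ∫ τ in (0:ℝ)..t, f τ) (t : ℝ) : F (t + 1) = F t + 1 := by
  have h1 : (∫ τ in (0:ℝ)..t, f τ) + ∫ τ in t..(t+1), f τ = ∫ τ in (0:ℝ)..(t+1), f τ :=
    intervalIntegral.integral_add_adjacent_intervals (hfc.intervalIntegrable _ _)
      (hfc.intervalIntegrable _ _)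
  have h2 : (∫ τ in t..(t+1), f τ) = ∫ τ in (0:ℝ)..(0+1:ℝ), f τ :=
    hfp.intervalIntegral_add_eq t 0
  rw [hF, hF, ← h1, h2]
  norm_num [hfm]

theorem cd_grow {f F : ℝ → ℝ} {η : ℝ} (hfc : Continuous f) (hfl : ∀ t, η ≤ f t)
    (hF : ∀ t, F t = ∫ τ in (0:ℝ)..t, f τ) {a b : ℝ} (hab : a ≤ b) :
    η * (b - a) ≤ F b - F a := by
  have h1 : (∫ τ in (0:ℝ)..a, f τ) + ∫ τ in a..b, f τ = ∫ τ in (0:ℝ)..b, f τ :=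
    intervalIntegral.integral_add_adjacent_intervals (hfc.intervalIntegrable _ _)
      (hfc.intervalIntegrable _ _)
  have h2 : F b - F a = ∫ τ in a..b, f τ := by rw [hF, hF, ← h1]; ring
  have h3 : (∫ τ in a..b, (η:ℝ)) ≤ ∫ τ in a..b, f τ :=
    intervalIntegral.integral_mono_on hab intervalIntegrable_const
      (hfc.intervalIntegrable _ _) (fun x _ => hfl x)
  rw [h2]
  calc η * (b - a) = (b - a) • η := by rw [smul_eq_mul]; ring
  _ = ∫ τ in a..b, (η:ℝ) := (intervalIntegral.integral_const η).symm
  _ ≤ _ := h3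

theorem cd_sm {f F : ℝ → ℝ} {η : ℝ} (hη : 0 < η) (hfc : Continuous f) (hfl : ∀ t, η ≤ f t)
    (hF : ∀ t, F t = ∫ τ in (0:ℝ)..t, f τ) : StrictMono F := by
  intro a b hab
  have := cd_grow hfc hfl hF hab.le
  nlinarith

theorem cd_inv_sm {F Finv : ℝ → ℝ} (hFsm : StrictMono F)
    (hF₂ : Function.RightInverse Finv F) : StrictMono Finv := by
  intro a b hab
  have : F (Finv a) < F (Finv b) := by rw [hF₂, hF₂]; exact hab
  exact hFsm.lt_iff_lt.mp this

theorem cd_inv_add {F Finv : ℝ → ℝ} (hFsm : StrictMono F)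
    (hFadd : ∀ t, F (t + 1) = F t + 1)
    (hF₂ : Function.RightInverse Finv F) (y : ℝ) : Finv (y + 1) = Finv y + 1 := by
  apply hFsm.injective
  rw [hF₂, hFadd, hF₂]

theorem cd_inv_lip {f F Finv : ℝ → ℝ} {η : ℝ} (hη : 0 < η)
    (hfc : Continuous f) (hfl : ∀ t, η ≤ f t)
    (hF : ∀ t, F t = ∫ τ in (0:ℝ)..t, f τ)
    (hF₂ : Function.RightInverse Finv F) (a b : ℝ) :
    |Finv a - Finv b| ≤ η⁻¹ * |a - b| := by
  have key : ∀ a b : ℝ, a ≤ b → Finv b - Finv a ≤ η⁻¹ * (b - a) := by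
    intro a b hab
    have hm : Finv a ≤ Finv b := (cd_inv_sm (cd_sm hη hfc hfl hF) hF₂).monotone hab
    have h2 := cd_grow hfc hfl hF hm
    rw [hF₂, hF₂] at h2
    have hη' : (0:ℝ) < η⁻¹ := inv_pos.mpr hη
    calc Finv b - Finv a = η⁻¹ * (η * (Finv b - Finv a)) := by field_simp
    _ ≤ η⁻¹ * (b - a) := mul_le_mul_of_nonneg_left h2 hη'.le
  have hmono := (cd_inv_sm (cd_sm hη hfc hfl hF) hF₂).monotone
  rcases le_total a b with h | h
  · rw [abs_sub_comm, abs_of_nonneg (by linarith [hmono h] : (0:ℝ) ≤ Finv b - Finv a),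
      abs_sub_comm, abs_of_nonneg (by linarith : (0:ℝ) ≤ b - a)]
    exact key a b h
  · rw [abs_of_nonneg (by linarith [hmono h] : (0:ℝ) ≤ Finv a - Finv b),
      abs_of_nonneg (by linarith : (0:ℝ) ≤ a - b)]
    exact key b a h

theorem cd_inv_cont {Finv : ℝ → ℝ} {η : ℝ} (hη : 0 < η)
    (hlip : ∀ a b : ℝ, |Finv a - Finv b| ≤ η⁻¹ * |a - b|) : Continuous Finv := by
  have : LipschitzWith (Real.toNNReal η⁻¹) Finv := by
    apply LipschitzWith.of_dist_le_mul
    intro x y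
    rw [Real.dist_eq, Real.dist_eq, Real.coe_toNNReal _ (inv_pos.mpr hη).le]
    exact hlip x y
  exact this.continuous

/-- I attains its global minimum at a unique point α*, and α* ∈ (−1, 1). -/
theorem I_unique_minimizer_in_Ioo
    (f g F G Finv Ginv : ℝ → ℝ) (η : ℝ) (hη : 0 < η)
    (hfc : Continuous f) (hgc : Continuous g)
    (hfp : Function.Periodic f 1) (hgp : Function.Periodic g 1)
    (hfl : ∀ t, η ≤ f t) (hgl : ∀ t, η ≤ g t)
    (hfm : (∫ t in (0:ℝ)..1, f t) = 1) (hgm : (∫ t in (0:ℝ)..1, g t) = 1)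
    (hF : ∀ t, F t = ∫ τ in (0:ℝ)..t, f τ) (hG : ∀ t, G t = ∫ τ in (0:ℝ)..t, g τ)
    (hF₁ : Function.LeftInverse Finv F) (hF₂ : Function.RightInverse Finv F)
    (hG₁ : Function.LeftInverse Ginv G) (hG₂ : Function.RightInverse Ginv G)
    (I : ℝ → ℝ) (hI : ∀ α, I α = ∫ t in (0:ℝ)..1, (Finv t - Ginv (t - α)) ^ 2) :
    ∃ αs : ℝ, αs ∈ Set.Ioo (-1 : ℝ) 1 ∧ (∀ α : ℝ, I αs ≤ I α) ∧
      ∀ β : ℝ, (∀ α : ℝ, I β ≤ I α) → β = αs := by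
  -- basic facts
  have hη' : (0:ℝ) < η⁻¹ := inv_pos.mpr hη
  have hFd : ∀ t, HasDerivAt F (f t) t := cd_hasDerivAt hfc hF
  have hGd : ∀ t, HasDerivAt G (g t) t := cd_hasDerivAt hgc hG
  have hFadd : ∀ t, F (t + 1) = F t + 1 := cd_add hfc hfp hfm hF
  have hGadd : ∀ t, G (t + 1) = G t + 1 := cd_add hgc hgp hgm hG
  have hFsm : StrictMono F := cd_sm hη hfc hfl hF
  have hGsm : StrictMono G := cd_sm hη hgc hgl hG
  have hFism : StrictMono Finv := cd_inv_sm hFsm hF₂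
  have hGism : StrictMono Ginv := cd_inv_sm hGsm hG₂
  have hFiadd : ∀ y, Finv (y + 1) = Finv y + 1 := cd_inv_add hFsm hFadd hF₂
  have hGiadd : ∀ y, Ginv (y + 1) = Ginv y + 1 := cd_inv_add hGsm hGadd hG₂
  have hFilip : ∀ a b : ℝ, |Finv a - Finv b| ≤ η⁻¹ * |a - b| := cd_inv_lip hη hfc hfl hF hF₂
  have hGilip : ∀ a b : ℝ, |Ginv a - Ginv b| ≤ η⁻¹ * |a - b| := cd_inv_lip hη hgc hgl hG hG₂
  have hFicont : Continuous Finv := cd_inv_cont hη hFilip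
  have hGicont : Continuous Ginv := cd_inv_cont hη hGilip
  have hF0 : F 0 = 0 := by rw [hF]; simp
  have hG0 : G 0 = 0 := by rw [hG]; simp
  have hF1 : F 1 = 1 := by rw [hF]; exact hfm
  have hG1 : G 1 = 1 := by rw [hG]; exact hgm
  have hFi0 : Finv 0 = 0 := by conv_lhs => rw [← hF0, hF₁]
  have hFi1 : Finv 1 = 1 := by conv_lhs => rw [← hF1, hF₁]
  have hGi0 : Ginv 0 = 0 := by conv_lhs => rw [← hG0, hG₁]
  have hGcont : Continuous G := continuous_iff_continuousAt.mpr fun x => (hGd x).continuousAt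
  have hgpos : ∀ t, 0 < g t := fun t => lt_of_lt_of_le hη (hgl t)
  have hint : ∀ γ : ℝ, IntervalIntegrable (fun s => Finv (G s + γ)) volume 0 1 :=
    fun γ => ((hFicont.comp (hGcont.add continuous_const)).intervalIntegrable _ _)
  -- derivative of Ginv
  have hGid : ∀ y, HasDerivAt Ginv ((g (Ginv y))⁻¹) y := by
    intro y
    exact HasDerivAt.of_local_left_inverse hGicont.continuousAt (hGd (Ginv y))
      (hgpos _).ne' (Filter.Eventually.of_forall hG₂)
  -- J and its properties
  set J : ℝ → ℝ := fun α => (∫ s in (0:ℝ)..1, Finv (G s + α)) - 2⁻¹ with hJ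
  have hJcont_aux : ∀ α β : ℝ, |J α - J β| ≤ η⁻¹ * |α - β| := by
    intro α β
    have hsub : J α - J β = ∫ s in (0:ℝ)..1, (Finv (G s + α) - Finv (G s + β)) := by
      rw [intervalIntegral.integral_sub (hint α) (hint β)]
      simp only [hJ]; ring
    have hb : ∀ s ∈ Set.uIoc (0:ℝ) 1, ‖Finv (G s + α) - Finv (G s + β)‖ ≤ η⁻¹ * |α - β| := by
      intro s _
      rw [Real.norm_eq_abs]
      calc |Finv (G s + α) - Finv (G s + β)| ≤ η⁻¹ * |(G s + α) - (G s + β)| := hFilip _ _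
      _ = η⁻¹ * |α - β| := by ring_nf
    have := intervalIntegral.norm_integral_le_of_norm_le_const hb
    rw [← hsub] at this
    simpa using this
  have hJcont : Continuous J := cd_inv_cont hη hJcont_aux
  have hJsm : StrictMono J := by
    intro α β hab
    have hpos : 0 < ∫ s in (0:ℝ)..1, (Finv (G s + β) - Finv (G s + α)) := by
      apply intervalIntegral.intervalIntegral_pos_of_pos ((hint β).sub (hint α))
      · intro s
        have : Finv (G s + α) < Finv (G s + β) := hFism (by linarith)
        linarith
      · norm_num
    rw [intervalIntegral.integral_sub (hint β) (hint α)] at hpos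
    simp only [hJ]
    linarith
  have hJ1 : 0 < J 1 := by
    have h1 : (∫ s in (0:ℝ)..1, Finv (G s + 1)) = (∫ s in (0:ℝ)..1, Finv (G s)) + 1 := by
      have : ∀ s : ℝ, Finv (G s + 1) = Finv (G s) + 1 := fun s => hFiadd (G s)
      rw [intervalIntegral.integral_congr (fun s _ => this s),
        intervalIntegral.integral_add (by simpa using hint 0) intervalIntegrable_const]
      simp
    have h2 : 0 ≤ ∫ s in (0:ℝ)..1, Finv (G s) := by
      apply intervalIntegral.integral_nonneg (by norm_num)
      intro s hs
      have : G 0 ≤ G s := hGsm.monotone hs.1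
      rw [hG0] at this
      have := hFism.monotone this
      rwa [hFi0] at this
    simp only [hJ]
    rw [h1]
    linarith
  have hJm1 : J (-1) < 0 := by
    have h1 : (∫ s in (0:ℝ)..1, Finv (G s + (-1))) = (∫ s in (0:ℝ)..1, Finv (G s)) - 1 := by
      have he : ∀ s : ℝ, Finv (G s + (-1)) = Finv (G s) - 1 := by
        intro s
        have := hFiadd (G s + (-1))
        simp at this
        linarith [this]
      rw [intervalIntegral.integral_congr (fun s _ => he s),
        intervalIntegral.integral_sub (by simpa using hint 0) intervalIntegrable_const]
      simp
    have h2 : (∫ s in (0:ℝ)..1, Finv (G s)) ≤ 1 := by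
      have hb : ∀ s ∈ Set.Icc (0:ℝ) 1, Finv (G s) ≤ (fun _ => (1:ℝ)) s := by
        intro s hs
        have : G s ≤ G 1 := hGsm.monotone hs.2
        rw [hG1] at this
        have := hFism.monotone this
        rwa [hFi1] at this
      have := intervalIntegral.integral_mono_on (by norm_num) (by simpa using hint 0)
        intervalIntegrable_const hb
      simpa using this
    simp only [hJ]
    rw [h1]
    linarith
  -- pointwise facts for differentiation under the integral
  have hGi1 : Ginv 1 = 1 := by conv_lhs => rw [← hG1, hG₁]
  have hGinvshift : ∀ x : ℝ, Continuous fun t => Ginv (t - x) :=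
    fun x => hGicont.comp (continuous_id.sub continuous_const)
  have hφcont : ∀ x : ℝ, Continuous fun t => 2 * (Finv t - Ginv (t - x)) * (g (Ginv (t - x)))⁻¹ := by
    intro x
    have h1 : Continuous fun t => g (Ginv (t - x)) := hgc.comp (hGinvshift x)
    exact (continuous_const.mul (hFicont.sub (hGinvshift x))).mul
      (h1.inv₀ fun t => (hgpos _).ne')
  have hΦcont : ∀ x : ℝ, Continuous fun t => (Finv t - Ginv (t - x)) ^ 2 :=
    fun x => (hFicont.sub (hGinvshift x)).pow 2
  have hder_pt : ∀ t x : ℝ, HasDerivAt (fun y => (Finv t - Ginv (t - y)) ^ 2)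
      (2 * (Finv t - Ginv (t - x)) * (g (Ginv (t - x)))⁻¹) x := by
    intro t x
    have h1 : HasDerivAt (fun y : ℝ => t - y) (-1) x := by
      simpa using (hasDerivAt_id x).const_sub t
    have h2 : HasDerivAt Ginv ((g (Ginv (t - x)))⁻¹) (t - x) := hGid _
    have h3 : HasDerivAt (fun y => Ginv (t - y)) ((g (Ginv (t - x)))⁻¹ * (-1)) x := h2.comp x h1
    have h4 := (h3.const_sub (Finv t)).fun_pow 2
    refine h4.congr_deriv ?_
    norm_num
  -- change of variables
  have hCoV : ∀ α : ℝ,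
      (∫ t in (0:ℝ)..1, 2 * (Finv t - Ginv (t - α)) * (g (Ginv (t - α)))⁻¹) = 2 * J α := by
    intro α
    set φ : ℝ → ℝ := fun t => 2 * (Finv t - Ginv (t - α)) * (g (Ginv (t - α)))⁻¹ with hφ
    set c : ℝ := Ginv (-α) with hc
    have hGc : G c = -α := hG₂ (-α)
    have hsub := intervalIntegral.integral_comp_smul_deriv (a := c) (b := c + 1)
      (f := fun s => G s + α) (f' := g) (g := φ)
      (fun x _ => (hGd x).add_const α) hgc.continuousOn (hφcont α)
    simp only [Function.comp, smul_eq_mul] at hsub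
    rw [hGadd, hGc, show -α + α = (0:ℝ) by ring, show -α + 1 + α = (1:ℝ) by ring] at hsub
    have heq : ∀ s : ℝ, g s * φ (G s + α) = 2 * (Finv (G s + α) - s) := by
      intro s
      simp only [hφ]
      rw [show G s + α - α = G s by ring, hG₁ s]
      field_simp
      exact mul_div_cancel_left₀ _ (hgpos s).ne'
    have hψper : Function.Periodic (fun s => 2 * (Finv (G s + α) - s)) 1 := by
      intro s
      simp only
      rw [hGadd, show G s + 1 + α = (G s + α) + 1 by ring, hFiadd]
      ring
    calc (∫ t in (0:ℝ)..1, φ t) = ∫ x in c..(c + 1), g x * φ (G x + α) := hsub.symm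
    _ = ∫ x in c..(c + 1), 2 * (Finv (G x + α) - x) :=
        intervalIntegral.integral_congr (fun x _ => heq x)
    _ = ∫ x in (0:ℝ)..(0 + 1), 2 * (Finv (G x + α) - x) := hψper.intervalIntegral_add_eq c 0
    _ = 2 * J α := by
        rw [show (0:ℝ) + 1 = 1 by norm_num, intervalIntegral.integral_const_mul,
          intervalIntegral.integral_sub (hint α) intervalIntegral.intervalIntegrable_id,
          integral_id]
        simp only [hJ]
        norm_num
  -- derivative of I
  have hId : ∀ α, HasDerivAt I (2 * J α) α := by
    intro α₀
    have main := intervalIntegral.hasDerivAt_integral_of_dominated_loc_of_deriv_le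
      (F := fun x t => (Finv t - Ginv (t - x)) ^ 2)
      (F' := fun x t => 2 * (Finv t - Ginv (t - x)) * (g (Ginv (t - x)))⁻¹)
      (bound := fun _ => 2 * (η⁻¹ + η⁻¹ * (|α₀| + 2)) * η⁻¹)
      (μ := volume) (a := 0) (b := 1) (x₀ := α₀) (Metric.ball_mem_nhds α₀ one_pos)
      (Filter.Eventually.of_forall fun x => (hΦcont x).aestronglyMeasurable)
      ((hΦcont α₀).intervalIntegrable _ _)
      ((hφcont α₀).aestronglyMeasurable)
      (Filter.Eventually.of_forall ?_)
      intervalIntegrable_const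
      (Filter.Eventually.of_forall fun t _ x _ => hder_pt t x)
    · have hd := main.2
      rw [hCoV α₀] at hd
      exact hd.congr_of_eventuallyEq (Filter.Eventually.of_forall fun x => hI x)
    · intro t ht x hx
      rw [Set.uIoc_of_le (by norm_num : (0:ℝ) ≤ 1)] at ht
      rw [Metric.mem_ball, Real.dist_eq] at hx
      have hFt : |Finv t| ≤ η⁻¹ := by
        have h := hFilip t 0
        rw [hFi0, sub_zero, sub_zero] at h
        have ht' : |t| ≤ 1 := abs_le.mpr ⟨by linarith [ht.1], ht.2⟩
        nlinarith
      have hGt : |Ginv (t - x)| ≤ η⁻¹ * (|α₀| + 2) := by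
        have h := hGilip (t - x) 0
        rw [hGi0, sub_zero, sub_zero] at h
        have ht' : |t| ≤ 1 := abs_le.mpr ⟨by linarith [ht.1], ht.2⟩
        have h1 : |t - x| ≤ |t| + |x| := abs_sub t x
        have h2 : |x| ≤ |α₀| + 1 := by
          have := abs_sub x α₀
          have h3 : |x| - |α₀| ≤ |x - α₀| := by
            have := abs_sub_abs_le_abs_sub x α₀
            linarith
          linarith
        nlinarith
      have hginv : |(g (Ginv (t - x)))⁻¹| ≤ η⁻¹ := by
        rw [abs_inv, abs_of_pos (hgpos _)]
        exact inv_anti₀ hη (hgl _)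
      have hAB : |Finv t - Ginv (t - x)| ≤ η⁻¹ + η⁻¹ * (|α₀| + 2) := by
        have := abs_sub (Finv t) (Ginv (t - x))
        linarith
      rw [Real.norm_eq_abs, abs_mul, abs_mul, show |(2:ℝ)| = 2 by norm_num]
      have hB0 : (0:ℝ) ≤ η⁻¹ + η⁻¹ * (|α₀| + 2) := by positivity
      nlinarith [abs_nonneg (Finv t - Ginv (t - x)), abs_nonneg ((g (Ginv (t - x)))⁻¹)]
  -- root of J
  obtain ⟨αs, hαs, hJαs⟩ : ∃ αs ∈ Set.Ioo (-1:ℝ) 1, J αs = 0 := by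
    have := intermediate_value_Ioo (by norm_num : (-1:ℝ) ≤ 1) hJcont.continuousOn
    have h0 : (0:ℝ) ∈ Set.Ioo (J (-1)) (J 1) := ⟨hJm1, hJ1⟩
    obtain ⟨x, hx, hx0⟩ := this h0
    exact ⟨x, hx, hx0⟩
  -- strict minimality
  have hIcont : Continuous I := by
    have : ∀ x : ℝ, ContinuousAt I x := fun x => (hId x).continuousAt
    exact continuous_iff_continuousAt.mpr this
  have key : ∀ α : ℝ, α ≠ αs → I αs < I α := by
    intro α hne
    rcases lt_or_gt_of_ne hne with h | h
    · -- α < αs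
      obtain ⟨c, hc, hc'⟩ := exists_hasDerivAt_eq_slope I (fun x => 2 * J x) h
        hIcont.continuousOn (fun x _ => hId x)
      have hJc : J c < 0 := by
        have := hJsm (show c < αs from hc.2)
        rwa [hJαs] at this
      have hslope : (I αs - I α) / (αs - α) < 0 := by rw [← hc']; linarith
      have hd : 0 < αs - α := by linarith
      have h1 : I αs - I α = ((I αs - I α)/(αs - α)) * (αs - α) := by field_simp
      nlinarith [mul_neg_of_neg_of_pos hslope hd]
    · -- αs < α
      obtain ⟨c, hc, hc'⟩ := exists_hasDerivAt_eq_slope I (fun x => 2 * J x) h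
        hIcont.continuousOn (fun x _ => hId x)
      have hJc : 0 < J c := by
        have := hJsm (show αs < c from hc.1)
        rwa [hJαs] at this
      have hslope : 0 < (I α - I αs) / (α - αs) := by rw [← hc']; linarith
      have hd : 0 < α - αs := by linarith
      have h1 : I α - I αs = ((I α - I αs)/(α - αs)) * (α - αs) := by field_simp
      nlinarith [mul_pos hslope hd]
  refine ⟨αs, hαs, ?_, ?_⟩
  · intro α
    rcases eq_or_ne α αs with rfl | hne
    · exact le_refl _
    · exact (key α hne).le
  · intro β hβ
    by_contra hne
    exact absurd (hβ αs) (not_le.mpr (key β hne))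
end
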